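/- arXiv:1207.3464 — 5 statements merged into one kernel-verified Lean document; each statement's English description precedes it below -/
import Mathlib

section
/- If F_X is continuous and (X,Y) has copula C with (U,V) ∼ C, then for all α, β ∈ (0,1), the β-quantile of the conditional distribution of Y given X ≥ VaR_α(X) equals F_Y^←(F_{V|U≥α}^←(β)), where F^← denotes the generalized inverse (left-continuous quantile function). -/
open MeasureTheory Set Filter Topology

/-- Generalized inverse (left-continuous quantile function) F^←(p) = inf {x : F x ≥ p}. -/
noncomputable def qf (F : ℝ → ℝ) (p : ℝ) : ℝ := sInf {x | p ≤ F x}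

/-- Distribution function of a random variable. -/
noncomputable def rvCdf {Ω : Type*} [MeasurableSpace Ω] (μ : Measure Ω) (X : Ω → ℝ) (x : ℝ) : ℝ :=
  (μ {ω | X ω ≤ x}).toReal

/-- Continuity from below along a sequence increasing to `q`. -/
lemma meas_lt_limit {Ω : Type*} [MeasurableSpace Ω] (μ : Measure Ω)
    (X : Ω → ℝ) (q : ℝ) (u : ℕ → ℝ) (hu : Monotone u)
    (hlt : ∀ n, u n < q) (hlim : Tendsto u atTop (𝓝 q)) :
    Tendsto (fun n => μ {ω | X ω ≤ u n}) atTop (𝓝 (μ {ω | X ω < q})) := by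
  have hset : {ω | X ω < q} = ⋃ n, {ω | X ω ≤ u n} := by
    ext ω
    simp only [mem_setOf_eq, mem_iUnion]
    constructor
    · intro h
      rcases (hlim.eventually (eventually_gt_nhds h)).exists with ⟨n, hn⟩
      exact ⟨n, hn.le⟩
    · rintro ⟨n, hn⟩; exact lt_of_le_of_lt hn (hlt n)
  rw [hset]
  exact tendsto_measure_iUnion_atTop (fun n m hnm ω hω => le_trans hω (hu hnm))

lemma meas_lt_eq {Ω : Type*} [MeasurableSpace Ω] (μ : Measure Ω)
    (X : Ω → ℝ) (q c : ℝ) (u : ℕ → ℝ) (hu : Monotone u) (hlt : ∀ n, u n < q)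
    (hlim : Tendsto u atTop (𝓝 q))
    (hval : Tendsto (fun n => μ {ω | X ω ≤ u n}) atTop (𝓝 (ENNReal.ofReal c))) :
    μ {ω | X ω < q} = ENNReal.ofReal c :=
  tendsto_nhds_unique (meas_lt_limit μ X q u hu hlt hlim) hval

/-- Right-continuity of `v ↦ μ ({X ≤ v} ∩ A)` along `p + 1/(n+1)`. -/
lemma meas_inter_rc {Ω : Type*} [MeasurableSpace Ω] (μ : Measure Ω) [IsFiniteMeasure μ]
    (X : Ω → ℝ) (hX : Measurable X) (A : Set Ω) (hA : MeasurableSet A) (p : ℝ) :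
    Tendsto (fun n : ℕ => μ ({ω | X ω ≤ p + 1/(n+1)} ∩ A)) atTop
      (𝓝 (μ ({ω | X ω ≤ p} ∩ A))) := by
  have htend : Tendsto (fun n : ℕ => p + 1/(n+1)) atTop (𝓝 p) := by
    have : Tendsto (fun n : ℕ => (1:ℝ)/(n+1)) atTop (𝓝 0) := tendsto_one_div_add_atTop_nhds_zero_nat
    have h2 := (tendsto_const_nhds (x := p) (f := atTop (α := ℕ))).add this
    simpa using h2
  have hset : {ω | X ω ≤ p} ∩ A = ⋂ n : ℕ, ({ω | X ω ≤ p + 1/(n+1)} ∩ A) := by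
    ext ω
    simp only [mem_inter_iff, mem_setOf_eq, mem_iInter]
    constructor
    · rintro ⟨h1, h2⟩ n
      refine ⟨h1.trans (le_add_of_nonneg_right (by positivity)), h2⟩
    · intro h
      refine ⟨?_, (h 0).2⟩
      exact ge_of_tendsto htend (Eventually.of_forall fun n => (h n).1)
  rw [hset]
  refine tendsto_measure_iInter_atTop
    (fun n => ((hX measurableSet_Iic).inter hA).nullMeasurableSet) ?_
    ⟨0, measure_ne_top μ _⟩
  intro n m hnm ω hω
  simp only [mem_inter_iff, mem_setOf_eq] at hω ⊢
  refine ⟨le_trans hω.1 ?_, hω.2⟩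
  have : (1:ℝ)/(m+1) ≤ 1/(n+1) := by
    apply one_div_le_one_div_of_le (by positivity)
    exact_mod_cast Nat.add_le_add_right hnm 1
  linarith

/-- Splitting a set along the level `q` of `X` when `{X = q}` is null. -/
lemma split_toReal {Ω : Type*} [MeasurableSpace Ω] (μ : Measure Ω) [IsFiniteMeasure μ]
    (X : Ω → ℝ) (hX : Measurable X) (q : ℝ) (hnull : μ {ω | X ω = q} = 0)
    (B : Set Ω) (hB : MeasurableSet B) :
    (μ (B ∩ {ω | q ≤ X ω})).toReal = (μ B).toReal - (μ (B ∩ {ω | X ω ≤ q})).toReal := by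
  have ht : MeasurableSet (B ∩ {ω | q ≤ X ω}) := hB.inter (hX measurableSet_Ici)
  have hsplit := measure_union_add_inter (μ := μ) (B ∩ {ω | X ω ≤ q}) ht
  have hunion : (B ∩ {ω | X ω ≤ q}) ∪ (B ∩ {ω | q ≤ X ω}) = B := by
    ext ω
    simp only [mem_union, mem_inter_iff, mem_setOf_eq]
    constructor
    · rintro (⟨h, _⟩ | ⟨h, _⟩) <;> exact h
    · intro h
      rcases le_total (X ω) q with h' | h'
      · exact Or.inl ⟨h, h'⟩
      · exact Or.inr ⟨h, h'⟩
  have hinter : μ ((B ∩ {ω | X ω ≤ q}) ∩ (B ∩ {ω | q ≤ X ω})) = 0 := by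
    refine measure_mono_null ?_ hnull
    rintro ω ⟨⟨_, h1⟩, ⟨_, h2⟩⟩
    exact le_antisymm h1 h2
  rw [hunion, hinter, add_zero] at hsplit
  have := congrArg ENNReal.toReal hsplit
  rw [ENNReal.toReal_add (measure_ne_top μ _) (measure_ne_top μ _)] at this
  linarith

/-- toReal of `1 - ofReal a`. -/
lemma one_sub_ofReal_toReal {a : ℝ} (h0 : 0 ≤ a) (h1 : a ≤ 1) :
    ((1 : ENNReal) - ENNReal.ofReal a).toReal = 1 - a := by
  rw [← ENNReal.ofReal_one, ← ENNReal.ofReal_sub _ h0]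
  exact ENNReal.toReal_ofReal (by linarith)

/-- if F_X is continuous and (X,Y) has copula C with (U,V) ∼ C, then
CoVaR_{α,β}(Y|X), the β-quantile of the law of Y given X ≥ VaR_α(X), equals
F_Y^←(F_{V|U≥α}^←(β)). -/
theorem covar_copula_representation
    {Ω Ω' : Type*} [MeasurableSpace Ω] [MeasurableSpace Ω']
    (μ : Measure Ω) (ν : Measure Ω') [IsProbabilityMeasure μ] [IsProbabilityMeasure ν]
    (X Y : Ω → ℝ) (U V : Ω' → ℝ)
    (hX : Measurable X) (hY : Measurable Y) (hU : Measurable U) (hV : Measurable V)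
    (C : ℝ → ℝ → ℝ)
    (hFXcont : Continuous (rvCdf μ X))
    (hSklar : ∀ x y, (μ {ω | X ω ≤ x ∧ Y ω ≤ y}).toReal = C (rvCdf μ X x) (rvCdf μ Y y))
    (hUV : ∀ u ∈ Icc (0:ℝ) 1, ∀ v ∈ Icc (0:ℝ) 1,
      (ν {ω | U ω ≤ u ∧ V ω ≤ v}).toReal = C u v)
    (hUunif : ∀ u ∈ Icc (0:ℝ) 1, (ν {ω | U ω ≤ u}).toReal = u)
    (hVunif : ∀ v ∈ Icc (0:ℝ) 1, (ν {ω | V ω ≤ v}).toReal = v)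
    (α β : ℝ) (hα : α ∈ Ioo (0:ℝ) 1) (hβ : β ∈ Ioo (0:ℝ) 1) :
    qf (fun y => (μ ({ω | Y ω ≤ y} ∩ {ω | qf (rvCdf μ X) α ≤ X ω})).toReal /
          (μ {ω | qf (rvCdf μ X) α ≤ X ω}).toReal) β
      = qf (rvCdf μ Y)
          (qf (fun v => (ν ({ω | V ω ≤ v} ∩ {ω | α ≤ U ω})).toReal /
                (ν {ω | α ≤ U ω}).toReal) β) := by
  obtain ⟨hα0, hα1⟩ := hα
  obtain ⟨hβ0, hβ1⟩ := hβ
  set F : ℝ → ℝ := rvCdf μ X with hFdef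
  set q : ℝ := qf F α with hqdef
  -- basic facts about F
  have hFmono : Monotone F := fun a b hab =>
    ENNReal.toReal_mono (measure_ne_top μ _) (measure_mono fun ω hω => le_trans hω hab)
  have hmeasF : ∀ x, μ {ω | X ω ≤ x} = ENNReal.ofReal (F x) := fun x =>
    (ENNReal.ofReal_toReal (measure_ne_top μ _)).symm
  -- the set {x | α ≤ F x}
  have hSXne : ∃ x : ℝ, α ≤ F x := by
    have hmono : Monotone (fun n : ℕ => {ω | X ω ≤ (n : ℝ)}) := by
      intro n m hnm ω hω
      simp only [mem_setOf_eq] at hω ⊢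
      exact le_trans hω (Nat.cast_le.mpr hnm)
    have huniv : (⋃ n : ℕ, {ω | X ω ≤ (n : ℝ)}) = univ := by
      ext ω
      simp only [mem_iUnion, mem_setOf_eq, mem_univ, iff_true]
      rcases exists_nat_ge (X ω) with ⟨n, hn⟩
      exact ⟨n, hn⟩
    have h1 := tendsto_measure_iUnion_atTop (μ := μ) hmono
    rw [huniv, measure_univ] at h1
    have h2 := (ENNReal.tendsto_toReal (a := 1) (by simp)).comp h1
    simp only [ENNReal.toReal_one] at h2
    rcases (h2.eventually (eventually_gt_nhds hα1)).exists with ⟨n, hn⟩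
    exact ⟨n, hn.le⟩
  have hSXbdd : BddBelow {x | α ≤ F x} := by
    have hanti : Antitone (fun n : ℕ => {ω | X ω ≤ -(n : ℝ)}) := by
      intro n m hnm ω hω
      simp only [mem_setOf_eq] at hω ⊢
      exact le_trans hω (by exact_mod_cast neg_le_neg (Nat.cast_le.mpr hnm))
    have hempty : (⋂ n : ℕ, {ω | X ω ≤ -(n : ℝ)}) = ∅ := by
      ext ω
      simp only [mem_iInter, mem_setOf_eq, mem_empty_iff_false, iff_false, not_forall, not_le]
      rcases exists_nat_gt (-(X ω)) with ⟨n, hn⟩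
      exact ⟨n, by linarith⟩
    have h1 := tendsto_measure_iInter_atTop (μ := μ)
      (fun n => (hX measurableSet_Iic).nullMeasurableSet) hanti ⟨0, measure_ne_top μ _⟩
    rw [show (⋂ n : ℕ, X ⁻¹' Iic (-(n:ℝ))) = ∅ from hempty, measure_empty] at h1
    have h2 := (ENNReal.tendsto_toReal (a := 0) (by simp)).comp h1
    simp only [ENNReal.toReal_zero] at h2
    rcases (h2.eventually (eventually_lt_nhds hα0)).exists with ⟨n, hn⟩
    refine ⟨-(n : ℝ), fun x hx => ?_⟩
    by_contra hcon
    push_neg at hcon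
    exact absurd (le_trans hx (hFmono hcon.le)) (not_le.mpr hn)
  have hSXclosed : IsClosed {x | α ≤ F x} := isClosed_le continuous_const hFXcont
  have hqmem : α ≤ F q := hSXclosed.csInf_mem hSXne hSXbdd
  have hFq : F q = α := by
    refine le_antisymm ?_ hqmem
    by_contra h
    push_neg at h
    have hev : ∀ᶠ x in 𝓝 q, α < F x :=
      (hFXcont.continuousAt (x := q)).eventually (eventually_gt_nhds h)
    have hev' : ∀ᶠ x in 𝓝[<] q, α < F x := eventually_nhdsWithin_of_eventually_nhds hev
    rcases (hev'.and (eventually_mem_nhdsWithin)).exists with ⟨x, hx, hxq⟩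
    exact absurd (csInf_le hSXbdd hx.le) (not_le.mpr hxq)
  -- measure of the tail event for X
  have hXlt : μ {ω | X ω < q} = ENNReal.ofReal α := by
    refine meas_lt_eq μ X q α (fun n => q - 1/(n+1)) ?_ ?_ ?_ ?_
    · intro n m hnm
      have : (1:ℝ)/(m+1) ≤ 1/(n+1) := by
        apply one_div_le_one_div_of_le (by positivity)
        exact_mod_cast Nat.add_le_add_right hnm 1
      linarith
    · intro n
      have : (0:ℝ) < 1/(n+1) := by positivity
      linarith
    · have h1 : Tendsto (fun n : ℕ => (1:ℝ)/(n+1)) atTop (𝓝 0) :=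
        tendsto_one_div_add_atTop_nhds_zero_nat
      have h2 := (tendsto_const_nhds (x := q) (f := atTop (α := ℕ))).sub h1
      simpa using h2
    · have h1 : Tendsto (fun n : ℕ => (1:ℝ)/(n+1)) atTop (𝓝 0) :=
        tendsto_one_div_add_atTop_nhds_zero_nat
      have h2 := (tendsto_const_nhds (x := q) (f := atTop (α := ℕ))).sub h1
      have h3 : Tendsto (fun n : ℕ => F (q - 1/(n+1))) atTop (𝓝 (F q)) :=
        (hFXcont.tendsto q).comp (by simpa using h2)
      have h4 := (ENNReal.continuous_ofReal.tendsto (F q)).comp h3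
      rw [hFq] at h4
      simpa [Function.comp_def, hmeasF] using h4
  have hXle : μ {ω | X ω ≤ q} = ENNReal.ofReal α := by rw [hmeasF, hFq]
  have hXeq : μ {ω | X ω = q} = 0 := by
    have hset : {ω | X ω = q} = {ω | X ω ≤ q} \ {ω | X ω < q} := by
      ext ω
      simp only [mem_setOf_eq, mem_diff, not_lt]
      constructor
      · intro h; exact ⟨h.le, h.ge⟩
      · intro h; exact le_antisymm h.1 h.2
    have hsub : {ω | X ω < q} ⊆ {ω | X ω ≤ q} := fun ω hω => le_of_lt (show X ω < q from hω)
    rw [hset, measure_diff hsub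
      ((hX measurableSet_Iio).nullMeasurableSet) (measure_ne_top μ _), hXlt, hXle, tsub_self]
  have hXtail : μ {ω | q ≤ X ω} = 1 - ENNReal.ofReal α := by
    have hset : {ω | q ≤ X ω} = {ω | X ω < q}ᶜ := by
      ext ω; simp [not_lt]
    rw [hset, measure_compl (show MeasurableSet {ω | X ω < q} from hX measurableSet_Iio)
      (measure_ne_top μ _), measure_univ, hXlt]
  have hXtailR : (μ {ω | q ≤ X ω}).toReal = 1 - α := by
    rw [hXtail, one_sub_ofReal_toReal hα0.le hα1.le]
  -- measure of the tail event for U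
  have hmeasU : ∀ u ∈ Icc (0:ℝ) 1, ν {ω | U ω ≤ u} = ENNReal.ofReal u := by
    intro u hu
    rw [← ENNReal.ofReal_toReal (measure_ne_top ν ({ω | U ω ≤ u})), hUunif u hu]
  have hUlt : ν {ω | U ω < α} = ENNReal.ofReal α := by
    refine meas_lt_eq ν U α α (fun n => α - α/(n+1)) ?_ ?_ ?_ ?_
    · intro n m hnm
      have : α/(m+1) ≤ α/(n+1) := by
        apply div_le_div_of_nonneg_left hα0.le (by positivity)
        exact_mod_cast Nat.add_le_add_right hnm 1
      linarith
    · intro n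
      have : (0:ℝ) < α/(n+1) := by positivity
      linarith
    · have h1 : Tendsto (fun n : ℕ => (1:ℝ)/(n+1)) atTop (𝓝 0) :=
        tendsto_one_div_add_atTop_nhds_zero_nat
      have h2 := h1.const_mul α
      have h3 := (tendsto_const_nhds (x := α) (f := atTop (α := ℕ))).sub h2
      simp only [mul_zero, sub_zero] at h3
      convert h3 using 2 with n
      ring
    · have hmem : ∀ n : ℕ, α - α/(n+1) ∈ Icc (0:ℝ) 1 := by
        intro n
        constructor
        · have h1 : α/(n+1) ≤ α := by
            rw [div_le_iff₀ (by positivity)]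
            nlinarith [Nat.cast_nonneg (α := ℝ) n]
          linarith
        · have : (0:ℝ) < α/(n+1) := by positivity
          linarith
      have h1 : Tendsto (fun n : ℕ => (1:ℝ)/(n+1)) atTop (𝓝 0) :=
        tendsto_one_div_add_atTop_nhds_zero_nat
      have h2 := h1.const_mul α
      have h3 := (tendsto_const_nhds (x := α) (f := atTop (α := ℕ))).sub h2
      simp only [mul_zero, sub_zero] at h3
      have h3' : Tendsto (fun n : ℕ => α - α/(n+1)) atTop (𝓝 α) := by
        convert h3 using 2 with n
        ring
      have h4 := (ENNReal.continuous_ofReal.tendsto α).comp h3'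
      have : (fun n : ℕ => ν {ω | U ω ≤ α - α/(n+1)})
          = fun n : ℕ => ENNReal.ofReal (α - α/(n+1)) := by
        funext n; exact hmeasU _ (hmem n)
      rw [this]
      exact h4
  have hUle : ν {ω | U ω ≤ α} = ENNReal.ofReal α :=
    hmeasU α ⟨hα0.le, hα1.le⟩
  have hUeq : ν {ω | U ω = α} = 0 := by
    have hset : {ω | U ω = α} = {ω | U ω ≤ α} \ {ω | U ω < α} := by
      ext ω
      simp only [mem_setOf_eq, mem_diff, not_lt]
      constructor
      · intro h; exact ⟨h.le, h.ge⟩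
      · intro h; exact le_antisymm h.1 h.2
    have hsub : {ω | U ω < α} ⊆ {ω | U ω ≤ α} := fun ω hω => le_of_lt (show U ω < α from hω)
    rw [hset, measure_diff hsub
      ((hU measurableSet_Iio).nullMeasurableSet) (measure_ne_top ν _), hUlt, hUle, tsub_self]
  have hUtailR : (ν {ω | α ≤ U ω}).toReal = 1 - α := by
    have hset : {ω | α ≤ U ω} = {ω | U ω < α}ᶜ := by
      ext ω; simp [not_lt]
    rw [hset, measure_compl (show MeasurableSet {ω | U ω < α} from hU measurableSet_Iio)
      (measure_ne_top ν _), measure_univ, hUlt,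
      one_sub_ofReal_toReal hα0.le hα1.le]
  -- facts about V
  have hV1 : ν {ω | V ω ≤ (1:ℝ)} = 1 := by
    rw [← ENNReal.ofReal_toReal (measure_ne_top ν _), hVunif 1 ⟨zero_le_one, le_refl 1⟩,
      ENNReal.ofReal_one]
  have hV1c : ν {ω | V ω ≤ (1:ℝ)}ᶜ = 0 := by
    rw [measure_compl (show MeasurableSet {ω | V ω ≤ (1:ℝ)} from hV measurableSet_Iic)
      (measure_ne_top ν _), measure_univ, hV1, tsub_self]
  have hV0 : ∀ v : ℝ, v < 0 → ν {ω | V ω ≤ v} = 0 := by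
    intro v hv
    have h0 : ν {ω | V ω ≤ (0:ℝ)} = 0 := by
      rw [← ENNReal.ofReal_toReal (measure_ne_top ν ({ω | V ω ≤ (0:ℝ)})),
        hVunif 0 ⟨le_refl 0, zero_le_one⟩, ENNReal.ofReal_zero]
    exact measure_mono_null (fun ω hω => le_trans (show V ω ≤ v from hω) hv.le) h0
  -- the conditional cdf on the copula side
  set G : ℝ → ℝ := fun v =>
    (ν ({ω | V ω ≤ v} ∩ {ω | α ≤ U ω})).toReal / (ν {ω | α ≤ U ω}).toReal with hGdef
  set FY : ℝ → ℝ := rvCdf μ Y with hFYdef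
  have hAm : MeasurableSet {ω | α ≤ U ω} := hU measurableSet_Ici
  have hDpos : (0:ℝ) < 1 - α := by linarith
  have hGmono : Monotone G := by
    intro a b hab
    have hnum : (ν ({ω | V ω ≤ a} ∩ {ω | α ≤ U ω})).toReal
        ≤ (ν ({ω | V ω ≤ b} ∩ {ω | α ≤ U ω})).toReal :=
      ENNReal.toReal_mono (measure_ne_top ν _)
        (measure_mono (inter_subset_inter_left _
          (fun ω hω => le_trans (show V ω ≤ a from hω) hab)))
    simp only [hGdef]
    rw [hUtailR]
    exact (div_le_div_iff_of_pos_right hDpos).mpr hnum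
  have hG0 : ∀ v : ℝ, v < 0 → G v = 0 := by
    intro v hv
    simp only [hGdef]
    rw [show ν ({ω | V ω ≤ v} ∩ {ω | α ≤ U ω}) = 0 from
      measure_mono_null inter_subset_left (hV0 v hv)]
    simp
  have hG1 : G 1 = 1 := by
    have h1 : ν ({ω | V ω ≤ (1:ℝ)} ∩ {ω | α ≤ U ω}) = ν {ω | α ≤ U ω} := by
      rw [inter_comm]
      exact measure_inter_conull hV1c
    simp only [hGdef]
    rw [h1, div_self (by rw [hUtailR]; linarith)]
  -- formula for the numerator on the copula side
  have hN : ∀ v ∈ Icc (0:ℝ) 1,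
      (ν ({ω | V ω ≤ v} ∩ {ω | α ≤ U ω})).toReal = v - C α v := by
    intro v hv
    have hsplit := split_toReal ν U hU α hUeq {ω | V ω ≤ v} (hV measurableSet_Iic)
    have h2 : {ω | V ω ≤ v} ∩ {ω | U ω ≤ α} = {ω | U ω ≤ α ∧ V ω ≤ v} := by
      ext ω
      simp only [mem_inter_iff, mem_setOf_eq]
      exact and_comm
    rw [hsplit, hVunif v hv, h2, hUV α ⟨hα0.le, hα1.le⟩ v hv]
  -- key identity: conditional cdf of Y given the tail of X is G ∘ FY
  have hkey : ∀ y : ℝ, (μ ({ω | Y ω ≤ y} ∩ {ω | q ≤ X ω})).toReal /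
      (μ {ω | q ≤ X ω}).toReal = G (FY y) := by
    intro y
    have hFY01 : FY y ∈ Icc (0:ℝ) 1 := by
      constructor
      · exact ENNReal.toReal_nonneg
      · have h1 : (μ {ω | Y ω ≤ y}).toReal ≤ (μ univ).toReal :=
          ENNReal.toReal_mono (measure_ne_top μ _) (measure_mono (subset_univ _))
        exact (by simpa using h1 : (μ {ω | Y ω ≤ y}).toReal ≤ 1)
    have hnum := split_toReal μ X hX q hXeq {ω | Y ω ≤ y} (hY measurableSet_Iic)
    have h2 : {ω | Y ω ≤ y} ∩ {ω | X ω ≤ q} = {ω | X ω ≤ q ∧ Y ω ≤ y} := by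
      ext ω
      simp only [mem_inter_iff, mem_setOf_eq]
      exact and_comm
    have hFYy : (μ {ω | Y ω ≤ y}).toReal = FY y := rfl
    simp only [hGdef]
    rw [hnum, h2, hSklar q y, hFq, hXtailR, hFYy, hN (FY y) hFY01, hUtailR]
  -- the set S and its infimum p
  set S : Set ℝ := {v | β ≤ G v} with hSdef
  have h1S : (1:ℝ) ∈ S := by
    simp only [hSdef, mem_setOf_eq, hG1]
    exact hβ1.le
  have hSbdd : BddBelow S := by
    refine ⟨0, fun v hv => ?_⟩
    by_contra hcon
    push_neg at hcon
    have hzero := hG0 v hcon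
    have hβG : β ≤ G v := hv
    rw [hzero] at hβG
    linarith
  set p : ℝ := sInf S with hpdef
  have hβGp : β ≤ G p := by
    have hrc := meas_inter_rc ν V hV {ω | α ≤ U ω} hAm p
    have hrc2 : Tendsto (fun n : ℕ => G (p + 1/(n+1))) atTop (𝓝 (G p)) := by
      have h3 := ((ENNReal.tendsto_toReal (measure_ne_top ν
        ({ω | V ω ≤ p} ∩ {ω | α ≤ U ω}))).comp hrc).div_const ((ν {ω | α ≤ U ω}).toReal)
      simpa [hGdef, Function.comp] using h3
    refine ge_of_tendsto hrc2 (Eventually.of_forall fun n => ?_)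
    have hpos : (0:ℝ) < 1/(n+1) := by positivity
    have hlt : p < p + 1/(n+1) := by linarith
    obtain ⟨v, hvS, hv⟩ := (csInf_lt_iff hSbdd ⟨1, h1S⟩).mp hlt
    exact le_trans hvS (hGmono hv.le)
  -- the two quantile sets coincide
  have hseteq : {y : ℝ | β ≤ (μ ({ω | Y ω ≤ y} ∩ {ω | q ≤ X ω})).toReal /
      (μ {ω | q ≤ X ω}).toReal} = {y : ℝ | p ≤ FY y} := by
    ext y
    simp only [mem_setOf_eq, hkey y]
    constructor
    · intro h
      exact csInf_le hSbdd h
    · intro h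
      exact le_trans hβGp (hGmono h)
  have hqfG : qf G β = p := rfl
  rw [hqfG]
  exact congrArg sInf hseteq
end

section
/- If F_X is continuous and (X,Y) has copula C with (U,V) ∼ C, then for all y ∈ ℝ and α ∈ (0,1), P(Y ≤ y | X ≥ VaR_α(X)) = F_{V|U≥α}(F_Y(y)) = (F_Y(y) − C(α, F_Y(y)))/(1−α). -/
open MeasureTheory Set Filter Topology

/-- If the cdf of `Z` along a monotone sequence converging to `t` from below tends to the
cdf value at `t`, then `{Z = t}` is a null set. -/
lemma atom_zero {Ω : Type*} [MeasurableSpace Ω] (μ : Measure Ω) [IsProbabilityMeasure μ]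
    {Z : Ω → ℝ} (hZ : Measurable Z) {t : ℝ} {ts : ℕ → ℝ} (hmono : Monotone ts)
    (hlt : ∀ n, ts n < t) (hlim : Tendsto ts atTop (𝓝 t))
    (hF : Tendsto (fun n => (μ {ω | Z ω ≤ ts n}).toReal) atTop
      (𝓝 ((μ {ω | Z ω ≤ t}).toReal))) :
    μ {ω | Z ω = t} = 0 := by
  set s : ℕ → Set Ω := fun n => {ω | Z ω ≤ ts n} with hs
  have hmonoS : Monotone s := fun m n h ω hω => le_trans hω (hmono h)
  have hUnion : ⋃ n, s n = {ω | Z ω < t} := by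
    ext ω
    simp only [hs, mem_iUnion, mem_setOf_eq]
    constructor
    · rintro ⟨n, hn⟩; exact lt_of_le_of_lt hn (hlt n)
    · intro h
      rcases (hlim.eventually (eventually_gt_nhds h)).exists with ⟨n, hn⟩
      exact ⟨n, hn.le⟩
  have h3 : Tendsto (fun n => μ (s n)) atTop (𝓝 (μ {ω | Z ω < t})) := by
    rw [← hUnion]; exact tendsto_measure_iUnion_atTop hmonoS
  have h4 : Tendsto (fun n => (μ (s n)).toReal) atTop (𝓝 ((μ {ω | Z ω < t}).toReal)) :=
    (ENNReal.tendsto_toReal (measure_ne_top μ _)).comp h3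
  have h5 : (μ {ω | Z ω < t}).toReal = (μ {ω | Z ω ≤ t}).toReal :=
    tendsto_nhds_unique h4 hF
  have h6 : μ {ω | Z ω < t} = μ {ω | Z ω ≤ t} :=
    (ENNReal.toReal_eq_toReal_iff' (measure_ne_top μ _) (measure_ne_top μ _)).mp h5
  have hsplit : μ {ω | Z ω ≤ t} = μ {ω | Z ω < t} + μ {ω | Z ω = t} := by
    have hdis : Disjoint {ω | Z ω < t} {ω | Z ω = t} := by
      rw [Set.disjoint_left]
      intro ω h1 h2
      simp only [mem_setOf_eq] at h1 h2
      exact absurd h2 h1.ne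
    rw [← measure_union hdis (hZ (measurableSet_singleton t))]
    congr 1
    ext ω
    simp only [mem_union, mem_setOf_eq]
    exact le_iff_lt_or_eq
  rw [h6] at hsplit
  have := hsplit.symm
  nth_rewrite 2 [← add_zero (μ {ω | Z ω ≤ t})] at this
  exact (ENNReal.add_right_inj (measure_ne_top μ _)).mp this

/-- Key computation: if `{Z = t}` is null then
`μ (A ∩ {t ≤ Z}) = μ A - μ (A ∩ {Z ≤ t})` in real numbers. -/
lemma inter_tail_eq {Ω : Type*} [MeasurableSpace Ω] (μ : Measure Ω) [IsProbabilityMeasure μ]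
    {Z : Ω → ℝ} (hZ : Measurable Z) {t : ℝ} (hzero : μ {ω | Z ω = t} = 0)
    {A : Set Ω} :
    (μ (A ∩ {ω | t ≤ Z ω})).toReal = (μ A).toReal - (μ (A ∩ {ω | Z ω ≤ t})).toReal := by
  have h1 : μ (A ∩ {ω | t ≤ Z ω}) = μ (A ∩ {ω | t < Z ω}) := by
    refine le_antisymm ?_
      (measure_mono (inter_subset_inter_right _ (fun ω (hω : t < Z ω) => (hω.le : t ≤ Z ω))))
    calc μ (A ∩ {ω | t ≤ Z ω}) ≤ μ ((A ∩ {ω | t < Z ω}) ∪ {ω | Z ω = t}) := by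
            apply measure_mono
            rintro ω ⟨h1, h2⟩
            simp only [mem_setOf_eq] at h2
            rcases lt_or_eq_of_le h2 with h' | h'
            · exact Or.inl ⟨h1, h'⟩
            · exact Or.inr h'.symm
        _ ≤ μ (A ∩ {ω | t < Z ω}) + μ {ω | Z ω = t} := measure_union_le _ _
        _ = μ (A ∩ {ω | t < Z ω}) := by rw [hzero, add_zero]
  have h2 : μ (A ∩ {ω | Z ω ≤ t}) + μ (A \ {ω | Z ω ≤ t}) = μ A :=
    measure_inter_add_diff A (hZ measurableSet_Iic)
  have hdiff : A \ {ω | Z ω ≤ t} = A ∩ {ω | t < Z ω} := by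
    ext ω; simp only [mem_diff, mem_inter_iff, mem_setOf_eq, not_le]
  rw [hdiff] at h2
  rw [h1]
  have := congrArg ENNReal.toReal h2
  rw [ENNReal.toReal_add (measure_ne_top μ _) (measure_ne_top μ _)] at this
  linarith

/-- if F_X is continuous and (X,Y) has copula C with (U,V) ∼ C, then for all
y ∈ ℝ and α ∈ (0,1): P(Y ≤ y | X ≥ VaR_α(X)) = F_{V|U≥α}(F_Y(y))
= (F_Y(y) − C(α, F_Y(y)))/(1−α). -/
theorem cond_cdf_given_var_excess
    {Ω Ω' : Type*} [MeasurableSpace Ω] [MeasurableSpace Ω']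
    (μ : Measure Ω) (ν : Measure Ω') [IsProbabilityMeasure μ] [IsProbabilityMeasure ν]
    (X Y : Ω → ℝ) (U V : Ω' → ℝ)
    (hX : Measurable X) (hY : Measurable Y) (hU : Measurable U) (hV : Measurable V)
    (C : ℝ → ℝ → ℝ)
    (hFXcont : Continuous (rvCdf μ X))
    (hSklar : ∀ x y, (μ {ω | X ω ≤ x ∧ Y ω ≤ y}).toReal = C (rvCdf μ X x) (rvCdf μ Y y))
    (hUV : ∀ u ∈ Icc (0:ℝ) 1, ∀ v ∈ Icc (0:ℝ) 1,
      (ν {ω | U ω ≤ u ∧ V ω ≤ v}).toReal = C u v)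
    (hUunif : ∀ u ∈ Icc (0:ℝ) 1, (ν {ω | U ω ≤ u}).toReal = u)
    (hVunif : ∀ v ∈ Icc (0:ℝ) 1, (ν {ω | V ω ≤ v}).toReal = v)
    (y : ℝ) (α : ℝ) (hα : α ∈ Ioo (0:ℝ) 1) :
    (μ ({ω | Y ω ≤ y} ∩ {ω | qf (rvCdf μ X) α ≤ X ω})).toReal /
        (μ {ω | qf (rvCdf μ X) α ≤ X ω}).toReal
      = (ν ({ω | V ω ≤ rvCdf μ Y y} ∩ {ω | α ≤ U ω})).toReal /
          (ν {ω | α ≤ U ω}).toReal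
    ∧ (μ ({ω | Y ω ≤ y} ∩ {ω | qf (rvCdf μ X) α ≤ X ω})).toReal /
        (μ {ω | qf (rvCdf μ X) α ≤ X ω}).toReal
      = (rvCdf μ Y y - C α (rvCdf μ Y y)) / (1 - α) := by
  obtain ⟨hα0, hα1⟩ := hα
  set F : ℝ → ℝ := rvCdf μ X with hF
  set p : ℝ := rvCdf μ Y y with hp
  set q : ℝ := qf F α with hq
  -- basic facts about F
  have hFdef : ∀ x, F x = (μ {ω | X ω ≤ x}).toReal := fun x => rfl
  have hFmono : Monotone F := by
    intro a b hab
    exact ENNReal.toReal_mono (measure_ne_top μ _)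
      (measure_mono (fun ω hω => le_trans hω hab))
  -- p ∈ [0,1]
  have hp01 : p ∈ Icc (0:ℝ) 1 := by
    constructor
    · exact ENNReal.toReal_nonneg
    · rw [hp, rvCdf]
      rw [show (1:ℝ) = (μ univ).toReal by simp]
      exact ENNReal.toReal_mono (measure_ne_top μ _) (measure_mono (subset_univ _))
  -- F tends to 1 at +∞ along ℕ
  have htop : Tendsto (fun n : ℕ => F (n : ℝ)) atTop (𝓝 1) := by
    have hmonoS : Monotone (fun n : ℕ => {ω | X ω ≤ (n : ℝ)}) := by
      intro m n h ω hω
      simp only [mem_setOf_eq] at hω ⊢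
      exact le_trans hω (Nat.cast_le.mpr h)
    have hU : ⋃ n : ℕ, {ω | X ω ≤ (n : ℝ)} = univ := by
      ext ω; simp only [mem_iUnion, mem_setOf_eq, mem_univ, iff_true]
      exact exists_nat_ge (X ω)
    have := tendsto_measure_iUnion_atTop (μ := μ) hmonoS
    rw [hU, measure_univ] at this
    have := (ENNReal.tendsto_toReal (by simp)).comp this
    rw [ENNReal.toReal_one] at this
    exact this
  -- F tends to 0 at -∞ along ℕ
  have hbot : Tendsto (fun n : ℕ => F (-(n : ℝ))) atTop (𝓝 0) := by
    have hanti : Antitone (fun n : ℕ => {ω | X ω ≤ -(n : ℝ)}) := by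
      intro m n h ω hω
      simp only [mem_setOf_eq] at hω ⊢
      have : (m : ℝ) ≤ (n : ℝ) := Nat.cast_le.mpr h
      linarith
    have hI : ⋂ n : ℕ, {ω | X ω ≤ -(n : ℝ)} = ∅ := by
      ext ω; simp only [mem_iInter, mem_setOf_eq, mem_empty_iff_false, iff_false, not_forall,
        not_le]
      rcases exists_nat_gt (-(X ω)) with ⟨n, hn⟩
      exact ⟨n, by linarith⟩
    have := tendsto_measure_iInter_atTop (μ := μ) (s := fun n : ℕ => {ω | X ω ≤ -(n : ℝ)})
      (fun n => (hX measurableSet_Iic).nullMeasurableSet) hanti ⟨0, measure_ne_top μ _⟩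
    simp only [Function.comp_def, hI, measure_empty] at this
    have := (ENNReal.tendsto_toReal (by simp)).comp this
    rw [ENNReal.toReal_zero] at this
    exact this
  -- the set S = {x | α ≤ F x}
  have hSne : {x | α ≤ F x}.Nonempty := by
    rcases (htop.eventually (eventually_ge_nhds hα1)).exists with ⟨n, hn⟩
    exact ⟨(n : ℝ), hn⟩
  have hSbdd : BddBelow {x | α ≤ F x} := by
    rcases (hbot.eventually (eventually_lt_nhds hα0)).exists with ⟨n, hn⟩
    refine ⟨-(n : ℝ), fun x hx => ?_⟩
    by_contra h
    push_neg at h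
    exact absurd (le_trans hx (hFmono h.le)) (not_le.mpr hn)
  have hSclosed : IsClosed {x | α ≤ F x} := isClosed_le continuous_const hFXcont
  have hFq_ge : α ≤ F q := hSclosed.csInf_mem hSne hSbdd
  have hFq_le : F q ≤ α := by
    have hts : Tendsto (fun n : ℕ => q - 1 / ((n : ℝ) + 1)) atTop (𝓝 q) := by
      have := tendsto_one_div_add_atTop_nhds_zero_nat (𝕜 := ℝ)
      have h := tendsto_const_nhds (x := q) (f := atTop (α := ℕ)) |>.sub this
      simpa using h
    have hcomp : Tendsto (fun n : ℕ => F (q - 1 / ((n : ℝ) + 1))) atTop (𝓝 (F q)) :=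
      (hFXcont.tendsto q).comp hts
    refine le_of_tendsto hcomp (Eventually.of_forall fun n => ?_)
    by_contra h
    push_neg at h
    have : q ≤ q - 1 / ((n : ℝ) + 1) := csInf_le hSbdd h.le
    have hpos : 0 < 1 / ((n : ℝ) + 1) := by positivity
    linarith
  have hFq : F q = α := le_antisymm hFq_le hFq_ge
  -- atom of X at q is null
  have hatomX : μ {ω | X ω = q} = 0 := by
    have hts : Tendsto (fun n : ℕ => q - 1 / ((n : ℝ) + 1)) atTop (𝓝 q) := by
      have := tendsto_one_div_add_atTop_nhds_zero_nat (𝕜 := ℝ)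
      have h := tendsto_const_nhds (x := q) (f := atTop (α := ℕ)) |>.sub this
      simpa using h
    refine atom_zero μ hX (ts := fun n : ℕ => q - 1 / ((n : ℝ) + 1)) ?_ ?_ hts ?_
    · intro m n h
      have : 1 / ((n : ℝ) + 1) ≤ 1 / ((m : ℝ) + 1) := by
        apply one_div_le_one_div_of_le (by positivity)
        have hc : (m : ℝ) ≤ (n : ℝ) := Nat.cast_le.mpr h
        linarith
      linarith
    · intro n
      have hpos : 0 < 1 / ((n : ℝ) + 1) := by positivity
      linarith
    · exact (hFXcont.tendsto q).comp hts
  -- atom of U at α is null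
  have hatomU : ν {ω | U ω = α} = 0 := by
    have hts : Tendsto (fun n : ℕ => α - α / ((n : ℝ) + 1)) atTop (𝓝 α) := by
      have h0 : Tendsto (fun n : ℕ => α * (1 / ((n : ℝ) + 1))) atTop (𝓝 (α * 0)) :=
        tendsto_const_nhds.mul tendsto_one_div_add_atTop_nhds_zero_nat
      have h := tendsto_const_nhds (x := α) (f := atTop (α := ℕ)) |>.sub h0
      simpa [mul_one_div, mul_comm, div_eq_mul_inv] using h
    have hmem : ∀ n : ℕ, α - α / ((n : ℝ) + 1) ∈ Icc (0:ℝ) 1 := by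
      intro n
      constructor
      · have : α / ((n : ℝ) + 1) ≤ α := by
          rw [div_le_iff₀ (by positivity)]
          nlinarith [Nat.cast_nonneg (α := ℝ) n]
        linarith
      · have : 0 ≤ α / ((n : ℝ) + 1) := by positivity
        linarith
    refine atom_zero ν hU (ts := fun n : ℕ => α - α / ((n : ℝ) + 1)) ?_ ?_ hts ?_
    · intro m n h
      have : α / ((n : ℝ) + 1) ≤ α / ((m : ℝ) + 1) := by
        apply div_le_div_of_nonneg_left hα0.le (by positivity)
        have hc : (m : ℝ) ≤ (n : ℝ) := Nat.cast_le.mpr h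
        linarith
      linarith
    · intro n
      have : 0 < α / ((n : ℝ) + 1) := by positivity
      linarith
    · have : ∀ n : ℕ, (ν {ω | U ω ≤ α - α / ((n : ℝ) + 1)}).toReal = α - α / ((n : ℝ) + 1) :=
        fun n => hUunif _ (hmem n)
      rw [hUunif α ⟨hα0.le, hα1.le⟩]
      simpa [this] using hts
  -- denominators
  have hdenX : (μ {ω | q ≤ X ω}).toReal = 1 - α := by
    have := inter_tail_eq μ hX hatomX (A := univ)
    simpa [univ_inter, hFq.symm, hFdef] using this
  have hdenU : (ν {ω | α ≤ U ω}).toReal = 1 - α := by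
    have := inter_tail_eq ν hU hatomU (A := univ)
    rw [univ_inter, univ_inter] at this
    rw [this, hUunif α ⟨hα0.le, hα1.le⟩]
    simp
  -- numerators
  have hnumX : (μ ({ω | Y ω ≤ y} ∩ {ω | q ≤ X ω})).toReal = p - C α p := by
    have h1 := inter_tail_eq μ hX hatomX (A := {ω | Y ω ≤ y})
    have h2 : {ω | Y ω ≤ y} ∩ {ω | X ω ≤ q} = {ω | X ω ≤ q ∧ Y ω ≤ y} := by
      ext ω; simp only [mem_inter_iff, mem_setOf_eq]; tauto
    rw [h1, h2, hSklar q y, hFq]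
    rfl
  have hnumU : (ν ({ω | V ω ≤ p} ∩ {ω | α ≤ U ω})).toReal = p - C α p := by
    have h1 := inter_tail_eq ν hU hatomU (A := {ω | V ω ≤ p})
    have h2 : {ω | V ω ≤ p} ∩ {ω | U ω ≤ α} = {ω | U ω ≤ α ∧ V ω ≤ p} := by
      ext ω; simp only [mem_inter_iff, mem_setOf_eq]; tauto
    rw [h1, h2, hUV α ⟨hα0.le, hα1.le⟩ p hp01, hVunif p hp01]
  constructor
  · rw [hnumX, hnumU, hdenX, hdenU]
  · rw [hnumX, hdenX]
end

section
/- Let C and C' be copulas with C ≤ C' pointwise (concordance order), and let (X,Y), (X',Y') be random vectors with copulas C, C' respectively, where F_X and F_{X'} are continuous and F_Y = F_{Y'}. Then for all α, β ∈ (0,1), CoVaR_{α,β}(Y|X) ≤ CoVaR_{α,β}(Y'|X'), where CoVaR_{α,β}(Y|X) is the β-quantile of the law of Y conditional on {X ≥ VaR_α(X)}. -/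
open MeasureTheory Set

/-- CoVaR_{α,β}(Y|X): β-quantile of the conditional law of Y given {X ≥ VaR_α(X)},
with VaR_α(X) = F_X^←(α). -/
noncomputable def covar {Ω : Type*} [MeasurableSpace Ω] (μ : Measure Ω) (X Y : Ω → ℝ)
    (α β : ℝ) : ℝ :=
  qf (fun y => (μ ({ω | Y ω ≤ y} ∩ {ω | qf (rvCdf μ X) α ≤ X ω})).toReal /
        (μ {ω | qf (rvCdf μ X) α ≤ X ω}).toReal) β

section Aux

open Filter Topology ProbabilityTheory

variable {Ω : Type*} [MeasurableSpace Ω] {μ : Measure Ω} [IsProbabilityMeasure μ]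
  {X : Ω → ℝ}

lemma rvCdf_eq_cdf (hX : Measurable X) : rvCdf μ X = cdf (μ.map X) := by
  have : IsProbabilityMeasure (μ.map X) := Measure.isProbabilityMeasure_map hX.aemeasurable
  funext x
  rw [cdf_eq_real, measureReal_def, Measure.map_apply hX measurableSet_Iic]
  rfl

lemma rvCdf_mono (hX : Measurable X) : Monotone (rvCdf μ X) := by
  rw [rvCdf_eq_cdf hX]
  have : IsProbabilityMeasure (μ.map X) := Measure.isProbabilityMeasure_map hX.aemeasurable
  exact monotone_cdf _

lemma rvCdf_tendsto_atTop (hX : Measurable X) :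
    Filter.Tendsto (rvCdf μ X) atTop (𝓝 1) := by
  rw [rvCdf_eq_cdf hX]
  have : IsProbabilityMeasure (μ.map X) := Measure.isProbabilityMeasure_map hX.aemeasurable
  exact tendsto_cdf_atTop _

lemma rvCdf_tendsto_atBot (hX : Measurable X) :
    Filter.Tendsto (rvCdf μ X) atBot (𝓝 0) := by
  rw [rvCdf_eq_cdf hX]
  have : IsProbabilityMeasure (μ.map X) := Measure.isProbabilityMeasure_map hX.aemeasurable
  exact tendsto_cdf_atBot _

/-- For a continuous distribution function, `F (qf F a) = a` when `a ∈ (0,1)`. -/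
lemma qf_cdf_eq {F : ℝ → ℝ} (hF : Continuous F) (hm : Monotone F)
    (h0 : Filter.Tendsto F atBot (𝓝 0)) (h1 : Filter.Tendsto F atTop (𝓝 1))
    {a : ℝ} (ha : a ∈ Ioo (0:ℝ) 1) : F (qf F a) = a := by
  obtain ⟨x1, hx1⟩ : ∃ x, a < F x := (h1.eventually (eventually_gt_nhds ha.2)).exists
  obtain ⟨x0, hx0⟩ : ∃ x, F x < a := (h0.eventually (eventually_lt_nhds ha.1)).exists
  have hne : {x | a ≤ F x}.Nonempty := ⟨x1, hx1.le⟩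
  have hbdd : BddBelow {x | a ≤ F x} := by
    refine ⟨x0, fun y hy => ?_⟩
    by_contra h
    push_neg at h
    exact absurd (hy.trans (hm h.le)) (not_le.mpr hx0)
  have hSc : IsClosed {x | a ≤ F x} := isClosed_le continuous_const hF
  have hmem : qf F a ∈ {x | a ≤ F x} := hSc.csInf_mem hne hbdd
  refine le_antisymm ?_ hmem
  by_contra h
  push_neg at h
  have hev : ∀ᶠ x in 𝓝 (qf F a), a < F x := hF.continuousAt.eventually (eventually_gt_nhds h)
  obtain ⟨x, hx, hxlt⟩ :=
    ((hev.filter_mono (nhdsWithin_le_nhds (s := Iio (qf F a)))).and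
      eventually_mem_nhdsWithin).exists
  exact absurd (csInf_le hbdd hx.le) (not_le.mpr hxlt)

/-- Continuity of the cdf at `q` implies `μ {X = q} = 0`. -/
lemma measure_atom_zero (hX : Measurable X) {q : ℝ}
    (hcont : ContinuousAt (rvCdf μ X) q) : μ {ω | X ω = q} = 0 := by
  have key : ∀ n : ℕ,
      (μ {ω | X ω = q}).toReal ≤ rvCdf μ X q - rvCdf μ X (q - 1/(n+1)) := by
    intro n
    have hpos : (0:ℝ) < 1/((n:ℝ)+1) := by positivity
    have hdisj : Disjoint {ω | X ω = q} {ω | X ω ≤ q - 1/((n:ℝ)+1)} := by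
      rw [Set.disjoint_left]
      intro ω h1 h2
      simp only [mem_setOf_eq] at h1 h2
      rw [h1] at h2
      linarith
    have hmeas : MeasurableSet {ω | X ω ≤ q - 1/((n:ℝ)+1)} := hX measurableSet_Iic
    have hsub : {ω | X ω = q} ∪ {ω | X ω ≤ q - 1/((n:ℝ)+1)} ⊆ {ω | X ω ≤ q} := by
      rintro ω (h | h)
      · exact le_of_eq h
      · simp only [mem_setOf_eq] at h ⊢; linarith
    have hle : μ {ω | X ω = q} + μ {ω | X ω ≤ q - 1/((n:ℝ)+1)} ≤ μ {ω | X ω ≤ q} := by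
      rw [← measure_union hdisj hmeas]
      exact measure_mono hsub
    have := ENNReal.toReal_mono (measure_ne_top μ _) hle
    rw [ENNReal.toReal_add (measure_ne_top μ _) (measure_ne_top μ _)] at this
    have e1 : (μ {ω | X ω ≤ q - 1/((n:ℝ)+1)}).toReal = rvCdf μ X (q - 1/((n:ℝ)+1)) := rfl
    have e2 : (μ {ω | X ω ≤ q}).toReal = rvCdf μ X q := rfl
    rw [e1, e2] at this
    linarith
  have hseq : Filter.Tendsto (fun n : ℕ => q - 1/((n:ℝ)+1)) atTop (𝓝 q) := by
    have := tendsto_one_div_add_atTop_nhds_zero_nat (𝕜 := ℝ)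
    simpa using tendsto_const_nhds.sub this
  have hlim : Filter.Tendsto
      (fun n : ℕ => rvCdf μ X q - rvCdf μ X (q - 1/((n:ℝ)+1))) atTop (𝓝 0) := by
    have h2 : Filter.Tendsto (fun n : ℕ => rvCdf μ X (q - 1/((n:ℝ)+1))) atTop
        (𝓝 (rvCdf μ X q)) := hcont.tendsto.comp hseq
    have h3 := Filter.Tendsto.sub
      (tendsto_const_nhds : Filter.Tendsto (fun _ : ℕ => rvCdf μ X q) atTop (𝓝 (rvCdf μ X q))) h2
    simpa using h3
  have h0 : (μ {ω | X ω = q}).toReal ≤ 0 := ge_of_tendsto' hlim key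
  have heq : (μ {ω | X ω = q}).toReal = 0 := le_antisymm h0 ENNReal.toReal_nonneg
  exact ((ENNReal.toReal_eq_zero_iff _).mp heq).resolve_right (measure_ne_top μ _)

/-- Measure of the tail event `{q ≤ X}` when the cdf has no atom at `q`. -/
lemma tail_toReal (hX : Measurable X) {q a : ℝ}
    (hatom : μ {ω | X ω = q} = 0) (hFq : rvCdf μ X q = a) (ha : a ∈ Icc (0:ℝ) 1) :
    (μ {ω | q ≤ X ω}).toReal = 1 - a := by
  have hms : MeasurableSet {ω | X ω ≤ q} := hX measurableSet_Iic
  have h1 : μ {ω | q ≤ X ω} = μ ({ω | X ω ≤ q}ᶜ) := by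
    apply le_antisymm
    · calc μ {ω | q ≤ X ω} ≤ μ ({ω | X ω ≤ q}ᶜ ∪ {ω | X ω = q}) := by
            apply measure_mono
            intro ω hω
            simp only [mem_setOf_eq] at hω
            rcases eq_or_lt_of_le hω with h | h
            · exact Or.inr h.symm
            · exact Or.inl (by simpa using not_le.mpr h)
        _ ≤ μ ({ω | X ω ≤ q}ᶜ) + μ {ω | X ω = q} := measure_union_le _ _
        _ = μ ({ω | X ω ≤ q}ᶜ) := by rw [hatom, add_zero]
    · refine measure_mono fun ω hω => ?_
      simp only [mem_compl_iff, mem_setOf_eq] at hω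
      exact le_of_lt (not_le.mp hω)
  have h2 : μ {ω | X ω ≤ q} = ENNReal.ofReal a := by
    rw [← hFq, rvCdf, ENNReal.ofReal_toReal (measure_ne_top μ _)]
  rw [h1, measure_compl hms (measure_ne_top μ _), measure_univ, h2,
    ENNReal.toReal_sub_of_le (by simpa using ENNReal.ofReal_le_one.mpr ha.2) ENNReal.one_ne_top,
    ENNReal.toReal_one, ENNReal.toReal_ofReal ha.1]

/-- Decomposition of the numerator in the CoVaR conditional probability. -/
lemma numerator_toReal (hX : Measurable X) {Y : Ω → ℝ} {q y : ℝ}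
    (hatom : μ {ω | X ω = q} = 0) :
    (μ ({ω | Y ω ≤ y} ∩ {ω | q ≤ X ω})).toReal
      = (μ {ω | Y ω ≤ y}).toReal - (μ {ω | X ω ≤ q ∧ Y ω ≤ y}).toReal := by
  set A := {ω | Y ω ≤ y}
  have h1 : μ (A ∩ {ω | q ≤ X ω}) = μ (A ∩ {ω | X ω ≤ q}ᶜ) := by
    apply le_antisymm
    · calc μ (A ∩ {ω | q ≤ X ω}) ≤ μ ((A ∩ {ω | X ω ≤ q}ᶜ) ∪ {ω | X ω = q}) := by
            apply measure_mono
            rintro ω ⟨hA, hq⟩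
            simp only [mem_setOf_eq] at hq
            rcases eq_or_lt_of_le hq with h | h
            · exact Or.inr h.symm
            · exact Or.inl ⟨hA, by simpa using not_le.mpr h⟩
        _ ≤ μ (A ∩ {ω | X ω ≤ q}ᶜ) + μ {ω | X ω = q} := measure_union_le _ _
        _ = μ (A ∩ {ω | X ω ≤ q}ᶜ) := by rw [hatom, add_zero]
    · refine measure_mono fun ω hω => ⟨hω.1, ?_⟩
      have := hω.2
      simp only [mem_compl_iff, mem_setOf_eq] at this
      exact le_of_lt (not_le.mp this)
  have hms : MeasurableSet {ω | X ω ≤ q} := hX measurableSet_Iic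
  have h2 : μ (A ∩ {ω | X ω ≤ q}) + μ (A ∩ {ω | X ω ≤ q}ᶜ) = μ A := by
    have := measure_inter_add_diff (μ := μ) A hms
    rwa [diff_eq] at this
  have h3 : A ∩ {ω | X ω ≤ q} = {ω | X ω ≤ q ∧ Y ω ≤ y} := by
    ext ω; exact and_comm
  have h4 := congrArg ENNReal.toReal h2
  rw [ENNReal.toReal_add (measure_ne_top μ _) (measure_ne_top μ _), h3] at h4
  rw [h1]
  linarith

end Aux

/-- C ⪯ C' (concordance order) with continuous F_X, F_{X'} and equal
Y-margins implies CoVaR_{α,β}(Y|X) ≤ CoVaR_{α,β}(Y'|X') for all α, β ∈ (0,1). -/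
theorem covar_mono_of_concordance
    {Ω Ω' : Type*} [MeasurableSpace Ω] [MeasurableSpace Ω']
    (μ : Measure Ω) (ν : Measure Ω') [IsProbabilityMeasure μ] [IsProbabilityMeasure ν]
    (X Y : Ω → ℝ) (X' Y' : Ω' → ℝ)
    (hX : Measurable X) (hY : Measurable Y) (hX' : Measurable X') (hY' : Measurable Y')
    (C C' : ℝ → ℝ → ℝ)
    (hSklar : ∀ x y, (μ {ω | X ω ≤ x ∧ Y ω ≤ y}).toReal = C (rvCdf μ X x) (rvCdf μ Y y))
    (hSklar' : ∀ x y, (ν {ω | X' ω ≤ x ∧ Y' ω ≤ y}).toReal =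
      C' (rvCdf ν X' x) (rvCdf ν Y' y))
    (hFXcont : Continuous (rvCdf μ X)) (hFX'cont : Continuous (rvCdf ν X'))
    (hYY' : rvCdf μ Y = rvCdf ν Y')
    (hCC' : ∀ u ∈ Icc (0:ℝ) 1, ∀ v ∈ Icc (0:ℝ) 1, C u v ≤ C' u v)
    (α β : ℝ) (hα : α ∈ Ioo (0:ℝ) 1) (hβ : β ∈ Ioo (0:ℝ) 1) :
    covar μ X Y α β ≤ covar ν X' Y' α β := by
  obtain ⟨hα0, hα1⟩ := hα
  obtain ⟨hβ0, hβ1⟩ := hβ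
  have h1α : (0:ℝ) < 1 - α := by linarith
  set q : ℝ := qf (rvCdf μ X) α with hq
  set q' : ℝ := qf (rvCdf ν X') α with hq'
  have hFq : rvCdf μ X q = α :=
    qf_cdf_eq hFXcont (rvCdf_mono hX) (rvCdf_tendsto_atBot hX) (rvCdf_tendsto_atTop hX)
      ⟨hα0, hα1⟩
  have hFq' : rvCdf ν X' q' = α :=
    qf_cdf_eq hFX'cont (rvCdf_mono hX') (rvCdf_tendsto_atBot hX') (rvCdf_tendsto_atTop hX')
      ⟨hα0, hα1⟩
  have hatom : μ {ω | X ω = q} = 0 := measure_atom_zero hX hFXcont.continuousAt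
  have hatom' : ν {ω | X' ω = q'} = 0 := measure_atom_zero hX' hFX'cont.continuousAt
  have hB : (μ {ω | q ≤ X ω}).toReal = 1 - α :=
    tail_toReal hX hatom hFq ⟨hα0.le, hα1.le⟩
  have hB' : (ν {ω | q' ≤ X' ω}).toReal = 1 - α :=
    tail_toReal hX' hatom' hFq' ⟨hα0.le, hα1.le⟩
  -- the conditional cdfs
  have hCval : ∀ y, (μ {ω | X ω ≤ q ∧ Y ω ≤ y}).toReal = C α (rvCdf μ Y y) := by
    intro y
    rw [hSklar q y, hFq]
  have hC'val : ∀ y, (ν {ω | X' ω ≤ q' ∧ Y' ω ≤ y}).toReal = C' α (rvCdf μ Y y) := by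
    intro y
    rw [hSklar' q' y, hFq', hYY']
  have hgeq : ∀ y, (μ ({ω | Y ω ≤ y} ∩ {ω | q ≤ X ω})).toReal / (μ {ω | q ≤ X ω}).toReal
      = (rvCdf μ Y y - C α (rvCdf μ Y y)) / (1 - α) := by
    intro y
    rw [numerator_toReal hX hatom, hB, hCval y]
    rfl
  have hgeq' : ∀ y, (ν ({ω | Y' ω ≤ y} ∩ {ω | q' ≤ X' ω})).toReal / (ν {ω | q' ≤ X' ω}).toReal
      = (rvCdf μ Y y - C' α (rvCdf μ Y y)) / (1 - α) := by
    intro y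
    rw [numerator_toReal hX' hatom', hB', hC'val y, hYY']
    rfl
  have e1 : covar μ X Y α β = sInf {y | β ≤ (rvCdf μ Y y - C α (rvCdf μ Y y)) / (1 - α)} := by
    unfold covar
    rw [← hq]
    unfold qf
    congr 1
    ext y
    simp only [mem_setOf_eq, hgeq]
  have e2 : covar ν X' Y' α β
      = sInf {y | β ≤ (rvCdf μ Y y - C' α (rvCdf μ Y y)) / (1 - α)} := by
    unfold covar
    rw [← hq']
    unfold qf
    congr 1
    ext y
    simp only [mem_setOf_eq, hgeq']
  -- basic bounds
  have hF01 : ∀ y, rvCdf μ Y y ∈ Icc (0:ℝ) 1 := by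
    intro y
    refine ⟨ENNReal.toReal_nonneg, ?_⟩
    have : μ {ω | Y ω ≤ y} ≤ 1 := prob_le_one
    simpa [rvCdf] using ENNReal.toReal_mono ENNReal.one_ne_top this
  have hCnn : ∀ y, 0 ≤ C α (rvCdf μ Y y) := by
    intro y
    rw [← hCval y]
    exact ENNReal.toReal_nonneg
  have hC'le : ∀ y, C' α (rvCdf μ Y y) ≤ α := by
    intro y
    rw [← hC'val y, ← hFq']
    exact ENNReal.toReal_mono (measure_ne_top ν _) (measure_mono fun ω h => h.1)
  -- inclusion of superlevel sets
  have hsub : {y | β ≤ (rvCdf μ Y y - C' α (rvCdf μ Y y)) / (1 - α)}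
      ⊆ {y | β ≤ (rvCdf μ Y y - C α (rvCdf μ Y y)) / (1 - α)} := by
    intro y hy
    simp only [mem_setOf_eq] at hy ⊢
    refine hy.trans ?_
    gcongr
    exact hCC' α ⟨hα0.le, hα1.le⟩ _ (hF01 y)
  -- nonemptiness of the primed superlevel set
  have hne : {y | β ≤ (rvCdf μ Y y - C' α (rvCdf μ Y y)) / (1 - α)}.Nonempty := by
    have hlt : α + β * (1 - α) < 1 := by nlinarith
    obtain ⟨y, hy⟩ :=
      ((rvCdf_tendsto_atTop (μ := μ) hY).eventually (eventually_gt_nhds hlt)).exists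
    refine ⟨y, ?_⟩
    simp only [mem_setOf_eq]
    rw [le_div_iff₀ h1α]
    have := hC'le y
    linarith
  -- lower bound for the unprimed superlevel set
  have hbdd : BddBelow {y | β ≤ (rvCdf μ Y y - C α (rvCdf μ Y y)) / (1 - α)} := by
    have hpos : 0 < β * (1 - α) := by positivity
    obtain ⟨y₀, hy₀⟩ :=
      ((rvCdf_tendsto_atBot (μ := μ) hY).eventually (eventually_lt_nhds hpos)).exists
    refine ⟨y₀, fun y hy => ?_⟩
    simp only [mem_setOf_eq] at hy
    by_contra h
    push_neg at h
    have hmono : rvCdf μ Y y ≤ rvCdf μ Y y₀ := rvCdf_mono hY h.le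
    rw [le_div_iff₀ h1α] at hy
    have := hCnn y
    linarith
  rw [e1, e2]
  exact csInf_le_csInf hbdd hne hsub
end

section
/- Under concordance ordering with equal Y margins, Marginal Expected Shortfall is monotone: if (X,Y) and (X',Y') have copulas C ⪯ C' with F_X, F_{X'} continuous, F_Y = F_{Y'}, and E|Y| < ∞, then MES_α(Y|X) := E[Y | X ≥ VaR_α(X)] ≤ E[Y' | X' ≥ VaR_α(X')] = MES_α(Y'|X') for all α ∈ (0,1). -/
open MeasureTheory Set

/-- Marginal Expected Shortfall MES_α(Y|X) = E[Y | X ≥ VaR_α(X)]. -/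
noncomputable def MES {Ω : Type*} [MeasurableSpace Ω] (μ : Measure Ω) (X Y : Ω → ℝ)
    (α : ℝ) : ℝ :=
  (∫ ω in {ω | qf (rvCdf μ X) α ≤ X ω}, Y ω ∂μ) /
    (μ {ω | qf (rvCdf μ X) α ≤ X ω}).toReal

open ProbabilityTheory Filter Topology in
/-- rvCdf agrees with the Mathlib cdf of the pushforward measure. -/
lemma rvCdf_eq_cdf_map {Ω : Type*} [MeasurableSpace Ω] (μ : Measure Ω) [IsProbabilityMeasure μ]
    (X : Ω → ℝ) (hX : Measurable X) : rvCdf μ X = fun x => cdf (μ.map X) x := by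
  have : IsProbabilityMeasure (μ.map X) := Measure.isProbabilityMeasure_map hX.aemeasurable
  funext x
  rw [rvCdf, cdf_eq_real, measureReal_def, Measure.map_apply hX measurableSet_Iic]
  rfl

open ProbabilityTheory Filter Topology in
/-- At level α ∈ (0,1), a continuous cdf attains α at the quantile. -/
lemma rvCdf_qf_eq {Ω : Type*} [MeasurableSpace Ω] (μ : Measure Ω) [IsProbabilityMeasure μ]
    (X : Ω → ℝ) (hX : Measurable X) (hcont : Continuous (rvCdf μ X))
    (α : ℝ) (hα : α ∈ Ioo (0:ℝ) 1) :
    rvCdf μ X (qf (rvCdf μ X) α) = α := by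
  set F := rvCdf μ X with hFdef
  have hmono : Monotone F := fun a b hab => ENNReal.toReal_mono (measure_ne_top _ _)
    (measure_mono fun ω h => le_trans h hab)
  have htop : Tendsto F atTop (𝓝 1) := by
    rw [hFdef, rvCdf_eq_cdf_map μ X hX]; exact tendsto_cdf_atTop _
  have hbot : Tendsto F atBot (𝓝 0) := by
    rw [hFdef, rvCdf_eq_cdf_map μ X hX]; exact tendsto_cdf_atBot _
  obtain ⟨b, hb⟩ : ∃ b, α < F b := (htop.eventually (eventually_gt_nhds hα.2)).exists
  obtain ⟨a, ha⟩ : ∃ a, ∀ x ≤ a, F x < α :=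
    eventually_atBot.mp (hbot.eventually (eventually_lt_nhds hα.1))
  have hSne : {x | α ≤ F x}.Nonempty := ⟨b, hb.le⟩
  have hSbdd : BddBelow {x | α ≤ F x} := by
    refine ⟨a, fun x hx => ?_⟩
    by_contra h
    push_neg at h
    exact absurd hx (not_le.mpr (ha x h.le))
  have hSclosed : IsClosed {x | α ≤ F x} := isClosed_le continuous_const hcont
  have hqmem : α ≤ F (qf F α) := hSclosed.csInf_mem hSne hSbdd
  obtain ⟨x₀, hx₀⟩ : ∃ x₀, F x₀ = α :=
    intermediate_value_univ a b hcont ⟨(ha a le_rfl).le, hb.le⟩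
  have hq_le : qf F α ≤ x₀ := csInf_le hSbdd (by simp [hx₀])
  exact le_antisymm ((hmono hq_le).trans hx₀.le) hqmem

open Filter Topology in
/-- A continuous cdf has no atoms at the quantile. -/
lemma atom_zero_s17 {Ω : Type*} [MeasurableSpace Ω] (μ : Measure Ω) [IsProbabilityMeasure μ]
    (X : Ω → ℝ) (hX : Measurable X) (hcont : Continuous (rvCdf μ X)) (q : ℝ) :
    μ {ω | X ω = q} = 0 := by
  set F := rvCdf μ X with hFdef
  have key : ∀ δ : ℝ, 0 < δ → (μ {ω | X ω = q}).toReal ≤ F q - F (q - δ) := by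
    intro δ hδ
    have hsub : {ω | X ω = q} ⊆ {ω | X ω ≤ q} \ {ω | X ω ≤ q - δ} := by
      intro ω h
      simp only [mem_setOf_eq] at h
      constructor
      · exact h.le
      · intro hc; simp only [mem_setOf_eq, h] at hc; linarith
    have hss : {ω | X ω ≤ q - δ} ⊆ {ω | X ω ≤ q} := by
      intro ω h
      simp only [mem_setOf_eq] at h ⊢
      linarith
    calc (μ {ω | X ω = q}).toReal
        ≤ (μ ({ω | X ω ≤ q} \ {ω | X ω ≤ q - δ})).toReal :=
          ENNReal.toReal_mono (measure_ne_top _ _) (measure_mono hsub)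
      _ = F q - F (q - δ) := by
          rw [measure_diff hss (measurableSet_le hX measurable_const).nullMeasurableSet
            (measure_ne_top _ _),
            ENNReal.toReal_sub_of_le (measure_mono hss) (measure_ne_top _ _)]
          rfl
  have hlim : Tendsto (fun δ : ℝ => F q - F (q - δ)) (𝓝[>] 0) (𝓝 0) := by
    have h1 : Tendsto (fun δ : ℝ => q - δ) (𝓝 0) (𝓝 q) := by
      simpa using tendsto_const_nhds.sub (tendsto_id (x := 𝓝 (0:ℝ)))
    have h2 : Tendsto (fun δ : ℝ => F (q - δ)) (𝓝 0) (𝓝 (F q)) :=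
      (hcont.tendsto q).comp h1
    have h3 := (tendsto_const_nhds (x := F q) (f := 𝓝 (0:ℝ))).sub h2
    simpa using h3.mono_left nhdsWithin_le_nhds
  have hle : (μ {ω | X ω = q}).toReal ≤ 0 :=
    ge_of_tendsto hlim (eventually_nhdsWithin_of_forall fun δ hδ => key δ hδ)
  have h0 : (μ {ω | X ω = q}).toReal = 0 := le_antisymm hle ENNReal.toReal_nonneg
  rcases ENNReal.toReal_eq_zero_iff _ |>.mp h0 with h | h
  · exact h
  · exact absurd h (measure_ne_top _ _)

/-- Mass of the tail set is 1 - α. -/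
lemma tail_measure {Ω : Type*} [MeasurableSpace Ω] (μ : Measure Ω) [IsProbabilityMeasure μ]
    (X : Ω → ℝ) (hX : Measurable X) (hcont : Continuous (rvCdf μ X))
    (α : ℝ) (hα : α ∈ Ioo (0:ℝ) 1) :
    μ {ω | qf (rvCdf μ X) α ≤ X ω} = ENNReal.ofReal (1 - α) := by
  set q := qf (rvCdf μ X) α with hq
  have hFq : rvCdf μ X q = α := rvCdf_qf_eq μ X hX hcont α hα
  have hatom : μ {ω | X ω = q} = 0 := atom_zero_s17 μ X hX hcont q
  have h1 : μ {ω | X ω ≤ q} = ENNReal.ofReal α := by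
    have : (μ {ω | X ω ≤ q}).toReal = α := hFq
    rw [← this, ENNReal.ofReal_toReal (measure_ne_top _ _)]
  have hlt : μ {ω | q < X ω} = 1 - ENNReal.ofReal α := by
    have hcompl : {ω | q < X ω} = {ω | X ω ≤ q}ᶜ := by
      ext ω; simp [not_le]
    rw [hcompl, measure_compl (measurableSet_le hX measurable_const) (measure_ne_top _ _),
      measure_univ, h1]
  have hunion : {ω | q ≤ X ω} = {ω | q < X ω} ∪ {ω | X ω = q} := by
    ext ω
    simp only [mem_setOf_eq, mem_union]
    constructor
    · intro h
      rcases eq_or_lt_of_le h with h' | h'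
      · exact Or.inr h'.symm
      · exact Or.inl h'
    · rintro (h | h)
      · exact h.le
      · exact h.ge
  have heq : μ {ω | q ≤ X ω} = μ {ω | q < X ω} := by
    have hge : μ {ω | q < X ω} ≤ μ {ω | q ≤ X ω} := by
      apply measure_mono
      intro ω h
      simp only [mem_setOf_eq] at h ⊢
      exact le_of_lt h
    refine le_antisymm ?_ hge
    calc μ {ω | q ≤ X ω} = μ ({ω | q < X ω} ∪ {ω | X ω = q}) := by rw [hunion]
      _ ≤ μ {ω | q < X ω} + μ {ω | X ω = q} := measure_union_le _ _
      _ = μ {ω | q < X ω} := by rw [hatom, add_zero]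
  rw [heq, hlt, ENNReal.ofReal_sub 1 hα.1.le, ENNReal.ofReal_one]

/-- Measure of the joint tail set in terms of cdfs. -/
lemma joint_tail {Ω : Type*} [MeasurableSpace Ω] (μ : Measure Ω) [IsProbabilityMeasure μ]
    (X Y : Ω → ℝ) (hX : Measurable X) (hY : Measurable Y) (q t : ℝ)
    (hatom : μ {ω | X ω = q} = 0) :
    (μ ({ω | Y ω ≤ t} ∩ {ω | q ≤ X ω})).toReal
      = rvCdf μ Y t - (μ {ω | X ω ≤ q ∧ Y ω ≤ t}).toReal := by
  set B := {ω | Y ω ≤ t} with hB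
  have h1 : μ (B ∩ {ω | X ω < q}) + μ (B \ {ω | X ω < q}) = μ B :=
    measure_inter_add_diff B (measurableSet_lt hX measurable_const)
  have h2 : B \ {ω | X ω < q} = B ∩ {ω | q ≤ X ω} := by
    ext ω; simp [hB, Set.mem_diff, not_lt, and_comm]
  have h3 : μ {ω | X ω ≤ q ∧ Y ω ≤ t} = μ (B ∩ {ω | X ω < q}) := by
    refine le_antisymm ?_ (measure_mono fun ω h => ⟨le_of_lt h.2, h.1⟩)
    have hsub : {ω | X ω ≤ q ∧ Y ω ≤ t} ⊆ (B ∩ {ω | X ω < q}) ∪ {ω | X ω = q} := by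
      intro ω h
      rcases lt_or_eq_of_le h.1 with h' | h'
      · exact Or.inl ⟨h.2, h'⟩
      · exact Or.inr h'
    calc μ {ω | X ω ≤ q ∧ Y ω ≤ t} ≤ μ ((B ∩ {ω | X ω < q}) ∪ {ω | X ω = q}) :=
          measure_mono hsub
      _ ≤ μ (B ∩ {ω | X ω < q}) + μ {ω | X ω = q} := measure_union_le _ _
      _ = μ (B ∩ {ω | X ω < q}) := by rw [hatom, add_zero]
  rw [h2] at h1
  rw [← h3] at h1
  have := congrArg ENNReal.toReal h1
  rw [ENNReal.toReal_add (measure_ne_top _ _) (measure_ne_top _ _)] at this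
  rw [rvCdf]
  linarith

/-- Workhorse: if the conditional sub-distribution of Y' dominates that of Y
(stochastically) with equal masses, the partial integrals are ordered. -/
lemma key_integral_mono {Ω Ω' : Type*} [MeasurableSpace Ω] [MeasurableSpace Ω']
    (μ : Measure Ω) (ν : Measure Ω') [IsFiniteMeasure μ] [IsFiniteMeasure ν]
    (Y : Ω → ℝ) (Y' : Ω' → ℝ) (hY : Measurable Y) (hY' : Measurable Y')
    (hIntY : Integrable Y μ) (hIntY' : Integrable Y' ν)
    (A : Set Ω) (A' : Set Ω') (hA : MeasurableSet A) (hA' : MeasurableSet A')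
    (hcdf : ∀ t : ℝ, ν ({ω | Y' ω ≤ t} ∩ A') ≤ μ ({ω | Y ω ≤ t} ∩ A))
    (hmass : μ A = ν A') :
    ∫ ω in A, Y ω ∂μ ≤ ∫ ω in A', Y' ω ∂ν := by
  have hIntA : Integrable Y (μ.restrict A) := hIntY.restrict
  have hIntA' : Integrable Y' (ν.restrict A') := hIntY'.restrict
  -- positive parts
  have hposμ : ∫⁻ ω, ENNReal.ofReal (Y ω) ∂(μ.restrict A)
      = ∫⁻ t in Ioi 0, μ ({ω | t < Y ω} ∩ A) := by
    have h1 : ∫⁻ ω, ENNReal.ofReal (Y ω) ∂(μ.restrict A)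
        = ∫⁻ ω, ENNReal.ofReal (max (Y ω) 0) ∂(μ.restrict A) := by
      congr 1; funext ω
      rcases le_total (Y ω) 0 with h | h
      · rw [max_eq_right h, ENNReal.ofReal_of_nonpos h, ENNReal.ofReal_zero]
      · rw [max_eq_left h]
    rw [h1, lintegral_eq_lintegral_meas_lt (f := fun ω => max (Y ω) 0) (μ.restrict A)
      (Filter.Eventually.of_forall fun ω => le_max_right _ _)
      ((hY.max measurable_const).aemeasurable)]
    refine setLIntegral_congr_fun measurableSet_Ioi (fun t ht => ?_)
    have hset : {a | t < max (Y a) 0} = {ω | t < Y ω} := by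
      ext a; simp only [mem_setOf_eq, lt_max_iff]
      exact or_iff_left (not_lt.mpr (le_of_lt ht))
    rw [hset, Measure.restrict_apply (measurableSet_lt measurable_const hY)]
  have hposν : ∫⁻ ω, ENNReal.ofReal (Y' ω) ∂(ν.restrict A')
      = ∫⁻ t in Ioi 0, ν ({ω | t < Y' ω} ∩ A') := by
    have h1 : ∫⁻ ω, ENNReal.ofReal (Y' ω) ∂(ν.restrict A')
        = ∫⁻ ω, ENNReal.ofReal (max (Y' ω) 0) ∂(ν.restrict A') := by
      congr 1; funext ω
      rcases le_total (Y' ω) 0 with h | h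
      · rw [max_eq_right h, ENNReal.ofReal_of_nonpos h, ENNReal.ofReal_zero]
      · rw [max_eq_left h]
    rw [h1, lintegral_eq_lintegral_meas_lt (f := fun ω => max (Y' ω) 0) (ν.restrict A')
      (Filter.Eventually.of_forall fun ω => le_max_right _ _)
      ((hY'.max measurable_const).aemeasurable)]
    refine setLIntegral_congr_fun measurableSet_Ioi (fun t ht => ?_)
    have hset : {a | t < max (Y' a) 0} = {ω | t < Y' ω} := by
      ext a; simp only [mem_setOf_eq, lt_max_iff]
      exact or_iff_left (not_lt.mpr (le_of_lt ht))
    rw [hset, Measure.restrict_apply (measurableSet_lt measurable_const hY')]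
  -- negative parts
  have hnegμ : ∫⁻ ω, ENNReal.ofReal (-Y ω) ∂(μ.restrict A)
      = ∫⁻ t in Ioi 0, μ ({ω | Y ω ≤ -t} ∩ A) := by
    have h1 : ∫⁻ ω, ENNReal.ofReal (-Y ω) ∂(μ.restrict A)
        = ∫⁻ ω, ENNReal.ofReal (max (-Y ω) 0) ∂(μ.restrict A) := by
      congr 1; funext ω
      rcases le_total (-Y ω) 0 with h | h
      · rw [max_eq_right h, ENNReal.ofReal_of_nonpos h, ENNReal.ofReal_zero]
      · rw [max_eq_left h]
    rw [h1, lintegral_eq_lintegral_meas_le (f := fun ω => max (-Y ω) 0) (μ.restrict A)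
      (Filter.Eventually.of_forall fun ω => le_max_right _ _)
      ((hY.neg.max measurable_const).aemeasurable)]
    refine setLIntegral_congr_fun measurableSet_Ioi (fun t ht => ?_)
    have hset : {a | t ≤ max (-Y a) 0} = {ω | Y ω ≤ -t} := by
      ext a
      simp only [mem_setOf_eq, le_max_iff]
      constructor
      · rintro (h | h)
        · linarith
        · exact absurd h (not_le.mpr ht)
      · intro h; left; linarith
    rw [hset, Measure.restrict_apply (measurableSet_le hY measurable_const)]
  have hnegν : ∫⁻ ω, ENNReal.ofReal (-Y' ω) ∂(ν.restrict A')
      = ∫⁻ t in Ioi 0, ν ({ω | Y' ω ≤ -t} ∩ A') := by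
    have h1 : ∫⁻ ω, ENNReal.ofReal (-Y' ω) ∂(ν.restrict A')
        = ∫⁻ ω, ENNReal.ofReal (max (-Y' ω) 0) ∂(ν.restrict A') := by
      congr 1; funext ω
      rcases le_total (-Y' ω) 0 with h | h
      · rw [max_eq_right h, ENNReal.ofReal_of_nonpos h, ENNReal.ofReal_zero]
      · rw [max_eq_left h]
    rw [h1, lintegral_eq_lintegral_meas_le (f := fun ω => max (-Y' ω) 0) (ν.restrict A')
      (Filter.Eventually.of_forall fun ω => le_max_right _ _)
      ((hY'.neg.max measurable_const).aemeasurable)]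
    refine setLIntegral_congr_fun measurableSet_Ioi (fun t ht => ?_)
    have hset : {a | t ≤ max (-Y' a) 0} = {ω | Y' ω ≤ -t} := by
      ext a
      simp only [mem_setOf_eq, le_max_iff]
      constructor
      · rintro (h | h)
        · linarith
        · exact absurd h (not_le.mpr ht)
      · intro h; left; linarith
    rw [hset, Measure.restrict_apply (measurableSet_le hY' measurable_const)]
  -- comparison of positive parts
  have hptwise : ∀ t : ℝ, μ ({ω | t < Y ω} ∩ A) ≤ ν ({ω | t < Y' ω} ∩ A') := by
    intro t
    have hdiffμ : {ω | t < Y ω} ∩ A = A \ ({ω | Y ω ≤ t} ∩ A) := by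
      ext ω
      simp only [mem_inter_iff, mem_setOf_eq, Set.mem_diff, not_and]
      constructor
      · rintro ⟨h1, h2⟩
        exact ⟨h2, fun hc => absurd hc (not_le.mpr h1)⟩
      · rintro ⟨h1, h2⟩
        exact ⟨not_le.mp fun hc => h2 hc h1, h1⟩
    have hdiffν : {ω | t < Y' ω} ∩ A' = A' \ ({ω | Y' ω ≤ t} ∩ A') := by
      ext ω
      simp only [mem_inter_iff, mem_setOf_eq, Set.mem_diff, not_and]
      constructor
      · rintro ⟨h1, h2⟩
        exact ⟨h2, fun hc => absurd hc (not_le.mpr h1)⟩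
      · rintro ⟨h1, h2⟩
        exact ⟨not_le.mp fun hc => h2 hc h1, h1⟩
    rw [hdiffμ, hdiffν,
      measure_diff inter_subset_right
        ((measurableSet_le hY measurable_const).inter hA).nullMeasurableSet (measure_ne_top _ _),
      measure_diff inter_subset_right
        ((measurableSet_le hY' measurable_const).inter hA').nullMeasurableSet (measure_ne_top _ _)]
    exact tsub_le_tsub hmass.le (hcdf t)
  have hP : ∫⁻ ω, ENNReal.ofReal (Y ω) ∂(μ.restrict A)
      ≤ ∫⁻ ω, ENNReal.ofReal (Y' ω) ∂(ν.restrict A') := by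
    rw [hposμ, hposν]
    exact lintegral_mono_ae (Filter.Eventually.of_forall fun t => hptwise t)
  have hN : ∫⁻ ω, ENNReal.ofReal (-Y' ω) ∂(ν.restrict A')
      ≤ ∫⁻ ω, ENNReal.ofReal (-Y ω) ∂(μ.restrict A) := by
    rw [hnegμ, hnegν]
    exact lintegral_mono_ae (Filter.Eventually.of_forall fun t => hcdf (-t))
  have hPfin' : ∫⁻ ω, ENNReal.ofReal (Y' ω) ∂(ν.restrict A') ≠ ⊤ :=
    hIntA'.lintegral_lt_top.ne
  have hNfin : ∫⁻ ω, ENNReal.ofReal (-Y ω) ∂(μ.restrict A) ≠ ⊤ :=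
    hIntA.neg.lintegral_lt_top.ne
  rw [integral_eq_lintegral_pos_part_sub_lintegral_neg_part hIntA,
    integral_eq_lintegral_pos_part_sub_lintegral_neg_part hIntA']
  exact sub_le_sub (ENNReal.toReal_mono hPfin' hP) (ENNReal.toReal_mono hNfin hN)

/-- if (X,Y) and (X',Y') have copulas C ⪯ C' with continuous F_X, F_{X'},
equal integrable Y-margins, then MES_α(Y|X) ≤ MES_α(Y'|X') for all α ∈ (0,1). -/
theorem MES_mono_of_concordance
    {Ω Ω' : Type*} [MeasurableSpace Ω] [MeasurableSpace Ω']
    (μ : Measure Ω) (ν : Measure Ω') [IsProbabilityMeasure μ] [IsProbabilityMeasure ν]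
    (X Y : Ω → ℝ) (X' Y' : Ω' → ℝ)
    (hX : Measurable X) (hY : Measurable Y) (hX' : Measurable X') (hY' : Measurable Y')
    (hIntY : Integrable Y μ) (hIntY' : Integrable Y' ν)
    (C C' : ℝ → ℝ → ℝ)
    (hSklar : ∀ x y, (μ {ω | X ω ≤ x ∧ Y ω ≤ y}).toReal = C (rvCdf μ X x) (rvCdf μ Y y))
    (hSklar' : ∀ x y, (ν {ω | X' ω ≤ x ∧ Y' ω ≤ y}).toReal =
      C' (rvCdf ν X' x) (rvCdf ν Y' y))
    (hFXcont : Continuous (rvCdf μ X)) (hFX'cont : Continuous (rvCdf ν X'))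
    (hYY' : rvCdf μ Y = rvCdf ν Y')
    (hCC' : ∀ u ∈ Icc (0:ℝ) 1, ∀ v ∈ Icc (0:ℝ) 1, C u v ≤ C' u v)
    (α : ℝ) (hα : α ∈ Ioo (0:ℝ) 1) :
    MES μ X Y α ≤ MES ν X' Y' α := by
  set q := qf (rvCdf μ X) α with hqdef
  set q' := qf (rvCdf ν X') α with hq'def
  set A := {ω | q ≤ X ω} with hAdef
  set A' := {ω | q' ≤ X' ω} with hA'def
  have hFq : rvCdf μ X q = α := rvCdf_qf_eq μ X hX hFXcont α hα
  have hFq' : rvCdf ν X' q' = α := rvCdf_qf_eq ν X' hX' hFX'cont α hα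
  have hatomμ : μ {ω | X ω = q} = 0 := atom_zero_s17 μ X hX hFXcont q
  have hatomν : ν {ω | X' ω = q'} = 0 := atom_zero_s17 ν X' hX' hFX'cont q'
  have hmassμ : μ A = ENNReal.ofReal (1 - α) := tail_measure μ X hX hFXcont α hα
  have hmassν : ν A' = ENNReal.ofReal (1 - α) := tail_measure ν X' hX' hFX'cont α hα
  have hmass : μ A = ν A' := by rw [hmassμ, hmassν]
  -- cdf comparison
  have hcdf : ∀ t : ℝ, ν ({ω | Y' ω ≤ t} ∩ A') ≤ μ ({ω | Y ω ≤ t} ∩ A) := by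
    intro t
    have hμval : (μ ({ω | Y ω ≤ t} ∩ A)).toReal
        = rvCdf μ Y t - C α (rvCdf μ Y t) := by
      rw [joint_tail μ X Y hX hY q t hatomμ, hSklar q t, hFq]
    have hνval : (ν ({ω | Y' ω ≤ t} ∩ A')).toReal
        = rvCdf μ Y t - C' α (rvCdf μ Y t) := by
      rw [joint_tail ν X' Y' hX' hY' q' t hatomν, hSklar' q' t, hFq', ← hYY']
    have hv01 : rvCdf μ Y t ∈ Icc (0:ℝ) 1 := by
      constructor
      · exact ENNReal.toReal_nonneg
      · rw [rvCdf]
        exact ENNReal.toReal_le_of_le_ofReal one_pos.le (by simpa using prob_le_one)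
    have hineq : (ν ({ω | Y' ω ≤ t} ∩ A')).toReal ≤ (μ ({ω | Y ω ≤ t} ∩ A)).toReal := by
      rw [hμval, hνval]
      have := hCC' α ⟨hα.1.le, hα.2.le⟩ (rvCdf μ Y t) hv01
      linarith
    exact (ENNReal.toReal_le_toReal (measure_ne_top _ _) (measure_ne_top _ _)).mp hineq
  have hAmeas : MeasurableSet A := measurableSet_le measurable_const hX
  have hA'meas : MeasurableSet A' := measurableSet_le measurable_const hX'
  have hnum : ∫ ω in A, Y ω ∂μ ≤ ∫ ω in A', Y' ω ∂ν :=
    key_integral_mono μ ν Y Y' hY hY' hIntY hIntY' A A' hAmeas hA'meas hcdf hmass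
  have hden : (μ A).toReal = 1 - α := by
    rw [hmassμ, ENNReal.toReal_ofReal (by linarith [hα.2])]
  have hden' : (ν A').toReal = 1 - α := by
    rw [hmassν, ENNReal.toReal_ofReal (by linarith [hα.2])]
  rw [MES, MES]
  rw [← hqdef, ← hq'def, ← hAdef, ← hA'def, hden, hden']
  have hpos : (0:ℝ) < 1 - α := by linarith [hα.2]
  have := mul_le_mul_of_nonneg_right hnum (le_of_lt (inv_pos.mpr hpos))
  simpa [div_eq_mul_inv] using this
end

section
/- For all α, β ∈ (0,1), CoVaR_{α,β}(Y|X) ≤ CoVaR_{α,β}(Y'|X') for all α,β is equivalent to the statement that P(Y > VaR_β(Y) | X > VaR_α(X)) ≤ P(Y' > VaR_β(Y') | X' > VaR_α(X')) for all α, β ∈ (0,1), assuming F_X, F_{X'}, F_Y, F_{Y'} are continuous and strictly increasing and F_Y = F_{Y'}. -/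
open MeasureTheory Set

/-- Conditional exceedance probability P(Y > VaR_β(Y) | X > VaR_α(X)). -/
noncomputable def condExceedProb {Ω : Type*} [MeasurableSpace Ω] (μ : Measure Ω)
    (X Y : Ω → ℝ) (α β : ℝ) : ℝ :=
  (μ ({ω | qf (rvCdf μ Y) β < Y ω} ∩ {ω | qf (rvCdf μ X) α < X ω})).toReal /
    (μ {ω | qf (rvCdf μ X) α < X ω}).toReal

section Aux
variable {Ω : Type*} [MeasurableSpace Ω] (μ : Measure Ω) [IsProbabilityMeasure μ] (Z : Ω → ℝ)

lemma rvCdf_nonneg (x : ℝ) : 0 ≤ rvCdf μ Z x := ENNReal.toReal_nonneg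

lemma rvCdf_le_one (x : ℝ) : rvCdf μ Z x ≤ 1 := by
  rw [rvCdf]
  calc (μ {ω | Z ω ≤ x}).toReal ≤ (1 : ENNReal).toReal :=
        ENNReal.toReal_mono ENNReal.one_ne_top prob_le_one
    _ = 1 := ENNReal.toReal_one

lemma rvCdf_mono_s18 : Monotone (rvCdf μ Z) := fun a b hab =>
  ENNReal.toReal_mono (measure_ne_top μ _) (measure_mono fun ω hω => le_trans hω hab)

lemma exists_rvCdf_gt {p : ℝ} (hp : p < 1) : ∃ x, p < rvCdf μ Z x := by
  by_contra h
  push_neg at h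
  have hmono : Monotone fun n : ℕ => {ω | Z ω ≤ (n : ℝ)} := fun m n hmn ω hω => by
    simp only [mem_setOf_eq] at hω ⊢
    have h : (m : ℝ) ≤ n := by exact_mod_cast hmn
    linarith
  have hU : (⋃ n : ℕ, {ω | Z ω ≤ (n : ℝ)}) = univ := by
    ext ω
    simp only [mem_iUnion, mem_univ, iff_true, mem_setOf_eq]
    exact exists_nat_ge (Z ω)
  have h1 := hmono.measure_iUnion (μ := μ)
  rw [hU, measure_univ] at h1
  have hle : ∀ n : ℕ, μ {ω | Z ω ≤ (n : ℝ)} ≤ ENNReal.ofReal p := by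
    intro n
    have h2 := h (n : ℝ)
    rw [rvCdf] at h2
    rw [← ENNReal.ofReal_toReal (measure_ne_top μ {ω | Z ω ≤ (n : ℝ)})]
    exact ENNReal.ofReal_le_ofReal h2
  have h3 : (1 : ENNReal) ≤ ENNReal.ofReal p := h1 ▸ iSup_le hle
  exact absurd (lt_of_le_of_lt h3 (ENNReal.ofReal_lt_one.2 hp)) (lt_irrefl _)

lemma exists_rvCdf_lt (hZ : Measurable Z) {p : ℝ} (hp : 0 < p) : ∃ x, rvCdf μ Z x < p := by
  by_contra h
  push_neg at h
  have hanti : Antitone fun n : ℕ => {ω | Z ω ≤ -(n : ℝ)} := fun m n hmn ω hω => by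
    simp only [mem_setOf_eq] at hω ⊢
    have h : (m : ℝ) ≤ n := by exact_mod_cast hmn
    linarith
  have hI : (⋂ n : ℕ, {ω | Z ω ≤ -(n : ℝ)}) = ∅ := by
    ext ω
    simp only [mem_iInter, mem_empty_iff_false, iff_false, not_forall, mem_setOf_eq, not_le]
    obtain ⟨n, hn⟩ := exists_nat_ge (-Z ω)
    exact ⟨n + 1, by push_cast; linarith⟩
  have h1 := hanti.measure_iInter (μ := μ)
    (fun n => (hZ measurableSet_Iic).nullMeasurableSet) ⟨0, measure_ne_top μ _⟩
  rw [hI, measure_empty] at h1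
  have hge : ∀ n : ℕ, ENNReal.ofReal p ≤ μ {ω | Z ω ≤ -(n : ℝ)} := by
    intro n
    have h2 := h (-(n : ℝ))
    rw [rvCdf] at h2
    rw [← ENNReal.ofReal_toReal (measure_ne_top μ {ω | Z ω ≤ -(n : ℝ)})]
    exact ENNReal.ofReal_le_ofReal h2
  have h3 : ENNReal.ofReal p ≤ 0 := h1 ▸ le_iInf hge
  exact absurd (lt_of_lt_of_le (ENNReal.ofReal_pos.2 hp) h3) (lt_irrefl _)

lemma qf_comp_self {F : ℝ → ℝ} (hs : StrictMono F) (x : ℝ) : qf F (F x) = x := by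
  have h : {y | F x ≤ F y} = Ici x := by ext y; simp [hs.le_iff_le]
  rw [qf, h, csInf_Ici]

lemma exists_rvCdf_eq (hZ : Measurable Z) (hc : Continuous (rvCdf μ Z)) {p : ℝ}
    (hp : p ∈ Ioo (0 : ℝ) 1) : ∃ x, rvCdf μ Z x = p := by
  obtain ⟨a, ha⟩ := exists_rvCdf_lt μ Z hZ hp.1
  obtain ⟨b, hb⟩ := exists_rvCdf_gt μ Z hp.2
  rcases le_total a b with hab | hab
  · obtain ⟨x, _, hx⟩ := intermediate_value_Icc hab hc.continuousOn ⟨ha.le, hb.le⟩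
    exact ⟨x, hx⟩
  · have := rvCdf_mono_s18 μ Z hab
    linarith

lemma rvCdf_qf (hZ : Measurable Z) (hc : Continuous (rvCdf μ Z))
    (hs : StrictMono (rvCdf μ Z)) {p : ℝ} (hp : p ∈ Ioo (0 : ℝ) 1) :
    rvCdf μ Z (qf (rvCdf μ Z) p) = p := by
  obtain ⟨x, hx⟩ := exists_rvCdf_eq μ Z hZ hc hp
  rw [← hx, qf_comp_self hs, hx]

lemma measure_level_set_eq_zero (hZ : Measurable Z) (hc : Continuous (rvCdf μ Z)) (q : ℝ) :
    μ {ω | Z ω = q} = 0 := by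
  have key : ∀ y, y < q → (μ {ω | Z ω = q}).toReal ≤ rvCdf μ Z q - rvCdf μ Z y := by
    intro y hy
    have hdisj : Disjoint {ω | Z ω ≤ y} {ω | Z ω = q} := by
      rw [Set.disjoint_left]
      intro ω h1 h2
      simp only [mem_setOf_eq] at h1 h2
      rw [h2] at h1; linarith
    have hsub : {ω | Z ω ≤ y} ∪ {ω | Z ω = q} ⊆ {ω | Z ω ≤ q} :=
      union_subset (fun ω h => le_trans h hy.le) (fun ω h => le_of_eq h)
    have hmeas : MeasurableSet {ω | Z ω = q} := hZ (measurableSet_singleton q)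
    have h1 : μ {ω | Z ω ≤ y} + μ {ω | Z ω = q} ≤ μ {ω | Z ω ≤ q} := by
      rw [← measure_union hdisj hmeas]
      exact measure_mono hsub
    have h2 := ENNReal.toReal_mono (measure_ne_top μ _) h1
    rw [ENNReal.toReal_add (measure_ne_top μ _) (measure_ne_top μ _)] at h2
    rw [rvCdf, rvCdf]; linarith
  by_contra hne
  have hpos : 0 < (μ {ω | Z ω = q}).toReal := ENNReal.toReal_pos hne (measure_ne_top μ _)
  obtain ⟨δ, hδpos, hδ⟩ := Metric.continuous_iff.1 hc q _ hpos
  have h1 := key (q - δ / 2) (by linarith)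
  have h2 := hδ (q - δ / 2) (by rw [Real.dist_eq]; rw [abs_of_nonpos (by linarith)]; linarith)
  rw [Real.dist_eq, abs_lt] at h2
  linarith

lemma qf_measure_facts (hZ : Measurable Z) (hc : Continuous (rvCdf μ Z))
    (hs : StrictMono (rvCdf μ Z)) {α : ℝ} (hα : α ∈ Ioo (0 : ℝ) 1) :
    (μ {ω | qf (rvCdf μ Z) α < Z ω}).toReal = 1 - α ∧
    (μ {ω | qf (rvCdf μ Z) α ≤ Z ω}).toReal = 1 - α ∧
    ∀ S : Set Ω, μ (S ∩ {ω | qf (rvCdf μ Z) α ≤ Z ω}) = μ (S ∩ {ω | qf (rvCdf μ Z) α < Z ω}) := by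
  have hFq : rvCdf μ Z (qf (rvCdf μ Z) α) = α := rvCdf_qf μ Z hZ hc hs hα
  set q := qf (rvCdf μ Z) α with hqdef
  have hcompl : {ω | q < Z ω} = {ω | Z ω ≤ q}ᶜ := by ext ω; simp [not_le]
  have hms : MeasurableSet {ω | Z ω ≤ q} := hZ measurableSet_Iic
  have h1 : (μ {ω | q < Z ω}).toReal = 1 - α := by
    rw [hcompl, measure_compl hms (measure_ne_top μ _), measure_univ,
      ENNReal.toReal_sub_of_le prob_le_one ENNReal.one_ne_top, ENNReal.toReal_one]
    rw [rvCdf] at hFq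
    rw [hFq]
  have hatom : μ {ω | Z ω = q} = 0 := measure_level_set_eq_zero μ Z hZ hc q
  have hkey : ∀ S : Set Ω, μ (S ∩ {ω | q ≤ Z ω}) = μ (S ∩ {ω | q < Z ω}) := by
    intro S
    refine le_antisymm ?_ (measure_mono (inter_subset_inter_right S (by intro ω h; simp only [mem_setOf_eq] at h ⊢; exact le_of_lt h)))
    have hsplit : S ∩ {ω | q ≤ Z ω} ⊆ (S ∩ {ω | q < Z ω}) ∪ {ω | Z ω = q} := by
      intro ω hω
      obtain ⟨hωS, hωq⟩ := hω
      rcases lt_or_eq_of_le (show q ≤ Z ω from hωq) with h | h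
      · exact Or.inl ⟨hωS, h⟩
      · exact Or.inr h.symm
    calc μ (S ∩ {ω | q ≤ Z ω}) ≤ μ ((S ∩ {ω | q < Z ω}) ∪ {ω | Z ω = q}) :=
          measure_mono hsplit
      _ ≤ μ (S ∩ {ω | q < Z ω}) + μ {ω | Z ω = q} := measure_union_le _ _
      _ = μ (S ∩ {ω | q < Z ω}) := by rw [hatom, add_zero]
  have h2 : (μ {ω | q ≤ Z ω}).toReal = 1 - α := by
    have h3 := hkey univ
    rw [univ_inter, univ_inter] at h3
    rw [h3, h1]
  exact ⟨h1, h2, hkey⟩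

end Aux
section GfunAux

noncomputable def Gfun {Ω : Type*} [MeasurableSpace Ω] (μ : Measure Ω) (X Y : Ω → ℝ)
    (α y : ℝ) : ℝ :=
  (μ ({ω | Y ω ≤ y} ∩ {ω | qf (rvCdf μ X) α ≤ X ω})).toReal / (1 - α)

variable {Ω : Type*} [MeasurableSpace Ω] (μ : Measure Ω) [IsProbabilityMeasure μ] (X Y : Ω → ℝ)

lemma covar_eq_qf_Gfun (hX : Measurable X) (hFXc : Continuous (rvCdf μ X))
    (hFXs : StrictMono (rvCdf μ X)) {α : ℝ} (hα : α ∈ Ioo (0 : ℝ) 1) (β : ℝ) :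
    covar μ X Y α β = qf (Gfun μ X Y α) β := by
  have hA := (qf_measure_facts μ X hX hFXc hFXs hα).2.1
  unfold covar Gfun
  rw [hA]

lemma Gfun_mono {α : ℝ} (hα : α < 1) : Monotone (Gfun μ X Y α) := by
  intro a b hab
  unfold Gfun
  have h : (μ ({ω | Y ω ≤ a} ∩ {ω | qf (rvCdf μ X) α ≤ X ω})).toReal
      ≤ (μ ({ω | Y ω ≤ b} ∩ {ω | qf (rvCdf μ X) α ≤ X ω})).toReal :=
    ENNReal.toReal_mono (measure_ne_top μ _)
      (measure_mono (inter_subset_inter_left _ (by intro ω h; simp only [mem_setOf_eq] at h ⊢; linarith)))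
  have hc : (0 : ℝ) < 1 - α := by linarith
  exact div_le_div_of_nonneg_right h hc.le

lemma Gfun_le {α : ℝ} (hα : α < 1) (y : ℝ) : Gfun μ X Y α y ≤ rvCdf μ Y y / (1 - α) := by
  unfold Gfun rvCdf
  exact div_le_div_of_nonneg_right
    (ENNReal.toReal_mono (measure_ne_top μ _) (measure_mono inter_subset_left))
    (by linarith : (0:ℝ) ≤ 1 - α)

lemma Gfun_nonneg (α y : ℝ) (hα : α < 1) : 0 ≤ Gfun μ X Y α y :=
  div_nonneg ENNReal.toReal_nonneg (by linarith)

lemma Gfun_le_one (hX : Measurable X) (hFXc : Continuous (rvCdf μ X))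
    (hFXs : StrictMono (rvCdf μ X)) {α : ℝ} (hα : α ∈ Ioo (0 : ℝ) 1) (y : ℝ) :
    Gfun μ X Y α y ≤ 1 := by
  have hA := (qf_measure_facts μ X hX hFXc hFXs hα).2.1
  have hpos : (0 : ℝ) < 1 - α := by linarith [hα.2]
  unfold Gfun
  rw [div_le_one hpos, ← hA]
  exact ENNReal.toReal_mono (measure_ne_top μ _) (measure_mono inter_subset_right)

lemma Gfun_ge (hX : Measurable X) (hFXc : Continuous (rvCdf μ X))
    (hFXs : StrictMono (rvCdf μ X)) {α : ℝ} (hα : α ∈ Ioo (0 : ℝ) 1) (y : ℝ) :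
    (rvCdf μ Y y - α) / (1 - α) ≤ Gfun μ X Y α y := by
  have hA := (qf_measure_facts μ X hX hFXc hFXs hα).2.1
  have hpos : (0 : ℝ) < 1 - α := by linarith [hα.2]
  set A := {ω | qf (rvCdf μ X) α ≤ X ω} with hAdef
  have hmA : MeasurableSet A := hX measurableSet_Ici
  have hsplit : μ {ω | Y ω ≤ y} ≤ μ ({ω | Y ω ≤ y} ∩ A) + μ Aᶜ := by
    rw [← measure_inter_add_diff {ω | Y ω ≤ y} hmA]
    exact add_le_add le_rfl (measure_mono (diff_subset_iff.2 (by simp)))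
  have hAc : (μ Aᶜ).toReal = α := by
    rw [measure_compl hmA (measure_ne_top μ _), measure_univ,
      ENNReal.toReal_sub_of_le prob_le_one ENNReal.one_ne_top, ENNReal.toReal_one, hA]
    ring
  have h2 := ENNReal.toReal_mono
    (ENNReal.add_ne_top.2 ⟨measure_ne_top μ _, measure_ne_top μ _⟩) hsplit
  rw [ENNReal.toReal_add (measure_ne_top μ _) (measure_ne_top μ _), hAc] at h2
  unfold Gfun
  rw [div_le_div_iff₀ hpos hpos, ← hAdef]
  have h3 : rvCdf μ Y y = (μ {ω | Y ω ≤ y}).toReal := rfl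
  rw [h3]
  nlinarith
lemma Gfun_lip (hY : Measurable Y) {α : ℝ} (hα : α < 1) {y1 y2 : ℝ} (h12 : y1 ≤ y2) :
    Gfun μ X Y α y2 - Gfun μ X Y α y1 ≤ (rvCdf μ Y y2 - rvCdf μ Y y1) / (1 - α) := by
  have hpos : (0 : ℝ) < 1 - α := by linarith
  set A := {ω | qf (rvCdf μ X) α ≤ X ω} with hAdef
  have hm1 : MeasurableSet {ω | Y ω ≤ y1} := hY measurableSet_Iic
  -- μ ({Y ≤ y2} ∩ A) ≤ μ ({Y ≤ y1} ∩ A) + μ ({Y ≤ y2} \ {Y ≤ y1})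
  have hsub : {ω | Y ω ≤ y2} ∩ A ⊆ ({ω | Y ω ≤ y1} ∩ A) ∪ ({ω | Y ω ≤ y2} \ {ω | Y ω ≤ y1}) := by
    intro ω hω
    obtain ⟨h1, h2⟩ := hω
    by_cases hc : Y ω ≤ y1
    · exact Or.inl ⟨hc, h2⟩
    · exact Or.inr ⟨h1, hc⟩
  have h1 : μ ({ω | Y ω ≤ y2} ∩ A)
      ≤ μ ({ω | Y ω ≤ y1} ∩ A) + μ ({ω | Y ω ≤ y2} \ {ω | Y ω ≤ y1}) :=
    le_trans (measure_mono hsub) (measure_union_le _ _)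
  have h2 : μ ({ω | Y ω ≤ y2} \ {ω | Y ω ≤ y1}) = μ {ω | Y ω ≤ y2} - μ {ω | Y ω ≤ y1} :=
    measure_diff (by intro ω hω; simp only [mem_setOf_eq] at hω ⊢; linarith)
      hm1.nullMeasurableSet (measure_ne_top μ _)
  have hle : μ {ω | Y ω ≤ y1} ≤ μ {ω | Y ω ≤ y2} :=
    measure_mono (by intro ω hω; simp only [mem_setOf_eq] at hω ⊢; linarith)
  have h3 := ENNReal.toReal_mono
    (ENNReal.add_ne_top.2 ⟨measure_ne_top μ _, measure_ne_top μ _⟩) h1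
  rw [ENNReal.toReal_add (measure_ne_top μ _) (measure_ne_top μ _), h2,
    ENNReal.toReal_sub_of_le hle (measure_ne_top μ _)] at h3
  unfold Gfun
  rw [← hAdef, div_sub_div_same]
  refine div_le_div_of_nonneg_right ?_ hpos.le
  have e1 : rvCdf μ Y y1 = (μ {ω | Y ω ≤ y1}).toReal := rfl
  have e2 : rvCdf μ Y y2 = (μ {ω | Y ω ≤ y2}).toReal := rfl
  rw [e1, e2]
  linarith

lemma condExceedProb_eq (hX : Measurable X) (hY : Measurable Y)
    (hFXc : Continuous (rvCdf μ X)) (hFXs : StrictMono (rvCdf μ X))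
    {α : ℝ} (hα : α ∈ Ioo (0 : ℝ) 1) (β : ℝ) :
    condExceedProb μ X Y α β = 1 - Gfun μ X Y α (qf (rvCdf μ Y) β) := by
  obtain ⟨hB, hA, hkey⟩ := qf_measure_facts μ X hX hFXc hFXs hα
  have hpos : (0 : ℝ) < 1 - α := by linarith [hα.2]
  have hpart : μ ({ω | qf (rvCdf μ X) α < X ω} ∩ {ω | Y ω ≤ qf (rvCdf μ Y) β})
      + μ ({ω | qf (rvCdf μ X) α < X ω} \ {ω | Y ω ≤ qf (rvCdf μ Y) β})
      = μ {ω | qf (rvCdf μ X) α < X ω} := by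
    have := measure_inter_add_diff (μ := μ) {ω | qf (rvCdf μ X) α < X ω}
      (hY measurableSet_Iic : MeasurableSet {ω | Y ω ≤ qf (rvCdf μ Y) β})
    exact this
  have hdiff : {ω | qf (rvCdf μ X) α < X ω} \ {ω | Y ω ≤ qf (rvCdf μ Y) β}
      = {ω | qf (rvCdf μ Y) β < Y ω} ∩ {ω | qf (rvCdf μ X) α < X ω} := by
    ext ω
    simp only [mem_diff, mem_inter_iff, mem_setOf_eq, not_le]
    tauto
  have hcomm : {ω | qf (rvCdf μ X) α < X ω} ∩ {ω | Y ω ≤ qf (rvCdf μ Y) β}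
      = {ω | Y ω ≤ qf (rvCdf μ Y) β} ∩ {ω | qf (rvCdf μ X) α < X ω} := inter_comm _ _
  rw [hdiff, hcomm] at hpart
  have htr := congrArg ENNReal.toReal hpart
  rw [ENNReal.toReal_add (measure_ne_top μ _) (measure_ne_top μ _), hB,
    ← hkey {ω | Y ω ≤ qf (rvCdf μ Y) β}] at htr
  unfold condExceedProb Gfun
  rw [hB]
  field_simp
  linarith

lemma Gfun_set_nonempty (hX : Measurable X) (hFXc : Continuous (rvCdf μ X))
    (hFXs : StrictMono (rvCdf μ X)) {α : ℝ} (hα : α ∈ Ioo (0 : ℝ) 1)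
    {β : ℝ} (hβ1 : β < 1) : {y | β ≤ Gfun μ X Y α y}.Nonempty := by
  have h0 := hα.1
  have h1 := hα.2
  obtain ⟨y, hy⟩ := exists_rvCdf_gt μ Y (p := α + β * (1 - α)) (by nlinarith)
  refine ⟨y, ?_⟩
  have hge := Gfun_ge μ X Y hX hFXc hFXs hα y
  have hb : β ≤ (rvCdf μ Y y - α) / (1 - α) := by
    rw [le_div_iff₀ (by linarith)]
    nlinarith
  exact le_trans hb hge

lemma Gfun_set_bddBelow (hY : Measurable Y) {α : ℝ} (hα : α ∈ Ioo (0 : ℝ) 1)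
    {β : ℝ} (hβ0 : 0 < β) : BddBelow {y | β ≤ Gfun μ X Y α y} := by
  have h0 := hα.1
  have h1 := hα.2
  obtain ⟨y0, hy0⟩ := exists_rvCdf_lt μ Y hY (p := β * (1 - α)) (by nlinarith)
  refine ⟨y0, fun y hy => ?_⟩
  by_contra hcon
  push_neg at hcon
  have hle := Gfun_le μ X Y h1 y
  have hm : rvCdf μ Y y ≤ rvCdf μ Y y0 := rvCdf_mono_s18 μ Y hcon.le
  have hlt : rvCdf μ Y y / (1 - α) < β := by
    rw [div_lt_iff₀ (by linarith)]
    nlinarith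
  have hmem : β ≤ Gfun μ X Y α y := hy
  linarith

end GfunAux

/-- with continuous strictly increasing margins and F_Y = F_{Y'},
CoVaR_{α,β}(Y|X) ≤ CoVaR_{α,β}(Y'|X') for all α,β ∈ (0,1) if and only if
P(Y > VaR_β(Y) | X > VaR_α(X)) ≤ P(Y' > VaR_β(Y') | X' > VaR_α(X')) for all
α,β ∈ (0,1). -/
theorem covar_ordering_iff_cond_exceed_ordering
    {Ω Ω' : Type*} [MeasurableSpace Ω] [MeasurableSpace Ω']
    (μ : Measure Ω) (ν : Measure Ω') [IsProbabilityMeasure μ] [IsProbabilityMeasure ν]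
    (X Y : Ω → ℝ) (X' Y' : Ω' → ℝ)
    (hX : Measurable X) (hY : Measurable Y) (hX' : Measurable X') (hY' : Measurable Y')
    (hFXc : Continuous (rvCdf μ X)) (hFXs : StrictMono (rvCdf μ X))
    (hFX'c : Continuous (rvCdf ν X')) (hFX's : StrictMono (rvCdf ν X'))
    (hFYc : Continuous (rvCdf μ Y)) (hFYs : StrictMono (rvCdf μ Y))
    (hFY'c : Continuous (rvCdf ν Y')) (hFY's : StrictMono (rvCdf ν Y'))
    (hYY' : rvCdf μ Y = rvCdf ν Y') :
    (∀ α ∈ Ioo (0:ℝ) 1, ∀ β ∈ Ioo (0:ℝ) 1, covar μ X Y α β ≤ covar ν X' Y' α β)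
      ↔ (∀ α ∈ Ioo (0:ℝ) 1, ∀ β ∈ Ioo (0:ℝ) 1,
          condExceedProb μ X Y α β ≤ condExceedProb ν X' Y' α β) := by
  constructor
  · intro H α hα β hβ
    rw [condExceedProb_eq μ X Y hX hY hFXc hFXs hα β,
        condExceedProb_eq ν X' Y' hX' hY' hFX'c hFX's hα β]
    have hq : qf (rvCdf ν Y') β = qf (rvCdf μ Y) β := by rw [hYY']
    rw [hq]
    set y0 := qf (rvCdf μ Y) β with hy0def
    suffices h : Gfun ν X' Y' α y0 ≤ Gfun μ X Y α y0 by linarith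
    by_contra hcon
    push_neg at hcon
    have hG0 : 0 ≤ Gfun μ X Y α y0 := Gfun_nonneg μ X Y α y0 hα.2
    have hG1 : Gfun ν X' Y' α y0 ≤ 1 := Gfun_le_one ν X' Y' hX' hFX'c hFX's hα y0
    set γ := (Gfun μ X Y α y0 + Gfun ν X' Y' α y0) / 2 with hγdef
    have hγμ : Gfun μ X Y α y0 < γ := by rw [hγdef]; linarith
    have hγν : γ < Gfun ν X' Y' α y0 := by rw [hγdef]; linarith
    have hγ0 : 0 < γ := lt_of_le_of_lt hG0 hγμ
    have hγ1 : γ < 1 := lt_of_lt_of_le hγν hG1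
    have hpos : (0:ℝ) < 1 - α := by linarith [hα.2]
    have h1 : y0 ≤ qf (Gfun μ X Y α) γ := by
      refine le_csInf (Gfun_set_nonempty μ X Y hX hFXc hFXs hα hγ1) ?_
      intro b hb
      by_contra hb2
      push_neg at hb2
      have hmono := Gfun_mono μ X Y hα.2 hb2.le
      have hmem : γ ≤ Gfun μ X Y α b := hb
      linarith
    have hεpos : 0 < (Gfun ν X' Y' α y0 - γ) * (1 - α) := by nlinarith
    obtain ⟨δ, hδpos, hδ⟩ := Metric.continuous_iff.1 hFY'c y0 _ hεpos
    have hy1lt : y0 - δ / 2 < y0 := by linarith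
    have hdist := hδ (y0 - δ / 2) (by rw [Real.dist_eq, abs_of_nonpos (by linarith)]; linarith)
    rw [Real.dist_eq, abs_lt] at hdist
    have hlip := Gfun_lip ν X' Y' hY' hα.2 (le_of_lt hy1lt)
    have hstep : γ < Gfun ν X' Y' α (y0 - δ / 2) := by
      have hd2 : (rvCdf ν Y' y0 - rvCdf ν Y' (y0 - δ / 2)) / (1 - α)
          < Gfun ν X' Y' α y0 - γ := by
        rw [div_lt_iff₀ hpos]
        have := hdist.1
        linarith
      linarith
    have h2 : qf (Gfun ν X' Y' α) γ ≤ y0 - δ / 2 :=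
      csInf_le (Gfun_set_bddBelow ν X' Y' hY' hα hγ0) (by exact hstep.le)
    have hH := H α hα γ ⟨hγ0, hγ1⟩
    rw [covar_eq_qf_Gfun μ X Y hX hFXc hFXs hα γ,
        covar_eq_qf_Gfun ν X' Y' hX' hFX'c hFX's hα γ] at hH
    linarith
  · intro H α hα β hβ
    rw [covar_eq_qf_Gfun μ X Y hX hFXc hFXs hα β,
        covar_eq_qf_Gfun ν X' Y' hX' hFX'c hFX's hα β]
    have hpt : ∀ y, Gfun ν X' Y' α y ≤ Gfun μ X Y α y := by
      intro y
      have hp0 : 0 < rvCdf μ Y y :=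
        lt_of_le_of_lt (rvCdf_nonneg μ Y (y - 1)) (hFYs (by linarith : y - 1 < y))
      have hp1 : rvCdf μ Y y < 1 :=
        lt_of_lt_of_le (hFYs (by linarith : y < y + 1)) (rvCdf_le_one μ Y (y + 1))
      have hH := H α hα (rvCdf μ Y y) ⟨hp0, hp1⟩
      rw [condExceedProb_eq μ X Y hX hY hFXc hFXs hα _,
          condExceedProb_eq ν X' Y' hX' hY' hFX'c hFX's hα _] at hH
      have hqy : qf (rvCdf μ Y) (rvCdf μ Y y) = y := qf_comp_self hFYs y
      have hqy' : qf (rvCdf ν Y') (rvCdf μ Y y) = y := by rw [← hYY']; exact hqy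
      rw [hqy, hqy'] at hH
      linarith
    refine csInf_le_csInf (Gfun_set_bddBelow μ X Y hY hα hβ.1)
      (Gfun_set_nonempty ν X' Y' hX' hFX'c hFX's hα hβ.2) ?_
    intro y hy
    exact le_trans hy (hpt y)
end
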